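/- arXiv:2306.02079 — 2 statements merged into one kernel-verified Lean document; each statement's English description precedes it below -/
import Mathlib

section
/- Let G be a graph. If IC(G) = 4, then G is isomorphic to K_4, or to the join K_2 + \bar{K}_m for some m ≥ 2, or to the join K_1 + B where B belongs to the family B_2, or G belongs to the family B_1, or G belongs to the family B_3. -/
namespace ICNL

variable {V : Type*}

/-- `S` is a dominating set of `G`. -/
def Dominating (G : SimpleGraph V) (S : Set V) : Prop :=
  ∀ v : V, v ∈ S ∨ ∃ u ∈ S, G.Adj u v

/-- `S` is an independent set of `G`. -/
def IndepSet (G : SimpleGraph V) (S : Set V) : Prop :=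
  ∀ ⦃u : V⦄, u ∈ S → ∀ ⦃v : V⦄, v ∈ S → ¬ G.Adj u v

/-- `S` is an independent dominating set of `G`. -/
def IndepDom (G : SimpleGraph V) (S : Set V) : Prop :=
  IndepSet G S ∧ Dominating G S

/-- `A` and `B` form an independent coalition in `G`. -/
def ICCoalition (G : SimpleGraph V) (A B : Set V) : Prop :=
  Disjoint A B ∧ IndepSet G A ∧ IndepSet G B ∧
    ¬ IndepDom G A ∧ ¬ IndepDom G B ∧ IndepDom G (A ∪ B)

/-- `π` is a partition of the vertex set into nonempty classes. -/
def IsPartition (π : Finset (Finset V)) : Prop :=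
  (∀ A ∈ π, A.Nonempty) ∧ ∀ v : V, ∃! A : Finset V, A ∈ π ∧ v ∈ A

/-- `π` is an independent coalition partition of `G`. -/
def IsICPartition (G : SimpleGraph V) (π : Finset (Finset V)) : Prop :=
  IsPartition π ∧
    ∀ A ∈ π, (∃ v : V, (A : Set V) = {v} ∧ Dominating G (A : Set V)) ∨
      (¬ IndepDom G (A : Set V) ∧
        ∃ B ∈ π, B ≠ A ∧ ICCoalition G (A : Set V) (B : Set V))

/-- The independent coalition number: the maximum number of classes of an
ic-partition of `G`. -/
noncomputable def IC (G : SimpleGraph V) : ℕ :=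
  sSup {k | ∃ π : Finset (Finset V), IsICPartition G π ∧ π.card = k}


/-- `π` is an idomatic partition of `G`: a partition of the vertex set into
independent dominating sets. -/
def IsIdomaticPartition (G : SimpleGraph V) (π : Finset (Finset V)) : Prop :=
  IsPartition π ∧ ∀ A ∈ π, IndepDom G (A : Set V)

/-- The idomatic number: the maximum number of classes of an idomatic partition of `G`. -/
noncomputable def idNum (G : SimpleGraph V) : ℕ :=
  sSup {k | ∃ π : Finset (Finset V), IsIdomaticPartition G π ∧ π.card = k}

/-- The join `G + H` of two disjoint graphs: their disjoint union together with all
edges between vertices of `G` and vertices of `H`. -/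
def graphJoin {α β : Type*} (G : SimpleGraph α) (H : SimpleGraph β) :
    SimpleGraph (α ⊕ β) :=
  ((Gᶜ) ⊕g (Hᶜ))ᶜ

/-- `G` belongs to the family `B₁`: `G` is a bipartite graph with partite sets `H₁`
and `H₂` of cardinality at least `2` each, with minimum degree at least `1` and
idomatic number `2`. -/
def InB1 {U : Type*} (G : SimpleGraph U) : Prop :=
  ∃ H1 H2 : Set U, H1 ∪ H2 = Set.univ ∧ Disjoint H1 H2 ∧
    IndepSet G H1 ∧ IndepSet G H2 ∧ 2 ≤ H1.ncard ∧ 2 ≤ H2.ncard ∧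
    (∀ v : U, ∃ w : U, G.Adj v w) ∧ idNum G = 2

/-- `G` belongs to the family `B₂`: `G` is the disjoint union of a bipartite graph `H`
with minimum degree at least `1` and idomatic number `2`, together with a nonempty
edgeless graph. -/
def InB2 {U : Type*} (G : SimpleGraph U) : Prop :=
  ∃ (W : Type) (H : SimpleGraph W) (m : ℕ),
    1 ≤ m ∧ H.Colorable 2 ∧ (∀ v : W, ∃ w : W, H.Adj v w) ∧ idNum H = 2 ∧
    Nonempty (G ≃g (H ⊕g (⊥ : SimpleGraph (Fin m))))

/-- `G` belongs to the family `B₃`: `G` is the disjoint union of a `3`-partite graph `H`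
with minimum degree at least `1` and idomatic number `3`, together with a nonempty
edgeless graph. -/
def InB3 {U : Type*} (G : SimpleGraph U) : Prop :=
  ∃ (W : Type) (H : SimpleGraph W) (m : ℕ),
    1 ≤ m ∧ H.Colorable 3 ∧ (∀ v : W, ∃ w : W, H.Adj v w) ∧ idNum H = 3 ∧
    Nonempty (G ≃g (H ⊕g (⊥ : SimpleGraph (Fin m))))

section Basics
set_option linter.unusedSectionVars false

variable {V : Type*} [Fintype V] {G : SimpleGraph V}

/-- A proper subset of an independent set cannot dominate. -/
lemma not_dominating_of_miss {S T : Set V} (hT : IndepSet G T) (hS : S ⊆ T)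
    {w : V} (hw : w ∈ T) (hwS : w ∉ S) : ¬ Dominating G S := by
  intro hd
  rcases hd w with h | ⟨u, hu, hadj⟩
  · exact hwS h
  · exact hT (hS hu) hw hadj

lemma ic_bddAbove (G : SimpleGraph V) :
    BddAbove {k | ∃ π : Finset (Finset V), IsICPartition G π ∧ π.card = k} := by
  classical
  refine ⟨Fintype.card (Finset V), ?_⟩
  rintro k ⟨π, _, rfl⟩
  exact Finset.card_le_univ π

lemma id_bddAbove (G : SimpleGraph V) :
    BddAbove {k | ∃ π : Finset (Finset V), IsIdomaticPartition G π ∧ π.card = k} := by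
  classical
  refine ⟨Fintype.card (Finset V), ?_⟩
  rintro k ⟨π, _, rfl⟩
  exact Finset.card_le_univ π

lemma card_le_IC {π : Finset (Finset V)} (hπ : IsICPartition G π) : π.card ≤ IC G :=
  le_csSup (ic_bddAbove G) ⟨π, hπ, rfl⟩

lemma card_le_idNum {π : Finset (Finset V)} (hπ : IsIdomaticPartition G π) :
    π.card ≤ idNum G :=
  le_csSup (id_bddAbove G) ⟨π, hπ, rfl⟩

lemma exists_ic_partition (h : IC G = 4) :
    ∃ π : Finset (Finset V), IsICPartition G π ∧ π.card = 4 := by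
  have hne : {k | ∃ π : Finset (Finset V), IsICPartition G π ∧ π.card = k}.Nonempty := by
    by_contra hc
    rw [Set.not_nonempty_iff_eq_empty] at hc
    rw [IC, hc] at h
    simp at h
  have hmem := Nat.sSup_mem hne (ic_bddAbove G)
  rw [IC] at h
  rw [h] at hmem
  exact hmem

lemma class_nonmem {π : Finset (Finset V)} (hp : IsPartition π)
    {A B : Finset V} (hA : A ∈ π) (hB : B ∈ π) (hne : A ≠ B)
    {v : V} (hvA : v ∈ A) : v ∉ B := by
  intro hvB
  obtain ⟨C, _, hun⟩ := hp.2 v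
  exact hne ((hun A ⟨hA, hvA⟩).trans (hun B ⟨hB, hvB⟩).symm)

/-- A class is a dominating singleton. -/
def DomSingleton (G : SimpleGraph V) (A : Finset V) : Prop :=
  ∃ v : V, (A : Set V) = {v} ∧ Dominating G (A : Set V)

lemma DomSingleton.indepDom {A : Finset V} (h : DomSingleton G A) :
    IndepDom G (A : Set V) := by
  obtain ⟨v, hv, hd⟩ := h
  refine ⟨?_, hd⟩
  rw [hv]
  intro a ha b hb
  rw [Set.mem_singleton_iff] at ha hb
  subst ha; subst hb
  exact G.loopless.irrefl _

lemma universal_of_dom_singleton {v : V} (hd : Dominating G {v}) {w : V} (hw : w ≠ v) :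
    G.Adj v w := by
  rcases hd w with h | ⟨u, hu, hadj⟩
  · exact absurd h hw
  · rw [Set.mem_singleton_iff] at hu; subst hu; exact hadj

lemma icCoalition_symm {A B : Set V} (h : ICCoalition G A B) : ICCoalition G B A := by
  obtain ⟨h1, h2, h3, h4, h5, h6⟩ := h
  exact ⟨h1.symm, h3, h2, h5, h4, Set.union_comm A B ▸ h6⟩

lemma card_eq_four {s : Finset (Finset V)} (h : s.card = 4) :
    ∃ A B C D : Finset V, A ≠ B ∧ A ≠ C ∧ A ≠ D ∧ B ≠ C ∧ B ≠ D ∧ C ≠ D ∧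
      A ∈ s ∧ B ∈ s ∧ C ∈ s ∧ D ∈ s ∧ (∀ E ∈ s, E = A ∨ E = B ∨ E = C ∨ E = D) := by
  classical
  obtain ⟨A, s1, hA1, rfl, hs1⟩ := Finset.card_eq_succ.mp h
  obtain ⟨B, C, D, hBC, hBD, hCD, rfl⟩ := Finset.card_eq_three.mp hs1
  simp only [Finset.mem_insert, Finset.mem_singleton, not_or] at hA1
  refine ⟨A, B, C, D, hA1.1, hA1.2.1, hA1.2.2, hBC, hBD, hCD, ?_, ?_, ?_, ?_, ?_⟩ <;>
    simp only [Finset.mem_insert, Finset.mem_singleton] <;> tauto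

end Basics
section Split
set_option linter.unusedSectionVars false
set_option maxHeartbeats 1000000
variable {V : Type*} [Fintype V] {G : SimpleGraph V}

lemma IndepSet.mono {S T : Set V} (h : IndepSet G T) (hs : S ⊆ T) : IndepSet G S :=
  fun _ hu _ hv => h (hs hu) (hs hv)

lemma split_lemma (hnd : ∀ v : V, ¬ Dominating G {v}) {ρ : Finset (Finset V)}
    (hρ : IsIdomaticPartition G ρ) : 2 * ρ.card ≤ IC G := by
  classical
  rcases ρ.eq_empty_or_nonempty with rfl | ⟨D0, hD0⟩
  · simp
  have hVne : Nonempty V := ⟨(hρ.1.1 D0 hD0).choose⟩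
  set g : Finset V → V := fun D => if h : D.Nonempty then h.choose else Classical.arbitrary V
    with hg
  have hgmem : ∀ D ∈ ρ, g D ∈ D := by
    intro D hD
    have h := hρ.1.1 D hD
    simp only [hg, dif_pos h]
    exact h.choose_spec
  set f1 : Finset V → Finset V := fun D => {g D} with hf1
  set f2 : Finset V → Finset V := fun D => D.erase (g D) with hf2
  have hf1sub : ∀ D ∈ ρ, f1 D ⊆ D := by
    intro D hD
    simpa [hf1] using Finset.singleton_subset_iff.mpr (hgmem D hD)
  have hf2sub : ∀ D, f2 D ⊆ D := fun D => Finset.erase_subset _ _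
  have herase : ∀ D ∈ ρ, (f2 D).Nonempty := by
    intro D hD
    rw [Finset.nonempty_iff_ne_empty]
    intro hemp
    rcases (Finset.erase_eq_empty_iff D (g D)).mp hemp with rfl | hD1
    · exact Finset.not_nonempty_empty (hρ.1.1 _ hD)
    · have hdom := (hρ.2 D hD).2
      rw [hD1] at hdom
      exact hnd (g D) (by simpa using hdom)
  have hdisj : ∀ D ∈ ρ, ∀ D' ∈ ρ, D ≠ D' → ∀ v ∈ D, v ∉ D' :=
    fun D hD D' hD' hne v hv => class_nonmem hρ.1 hD hD' hne hv
  have hf1f2 : ∀ D ∈ ρ, ∀ D' ∈ ρ, f1 D ≠ f2 D' := by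
    intro D hD D' hD' heq
    have hgD : g D ∈ f2 D' := by rw [← heq]; simp [hf1]
    by_cases hDD' : D = D'
    · subst hDD'; exact Finset.notMem_erase _ _ hgD
    · exact hdisj D hD D' hD' hDD' (g D) (hgmem D hD) (hf2sub D' hgD)
  have hf1inj : ∀ D ∈ ρ, ∀ D' ∈ ρ, f1 D = f1 D' → D = D' := by
    intro D hD D' hD' heq
    by_contra hne
    have : g D ∈ f1 D' := by rw [← heq]; simp [hf1]
    simp only [hf1, Finset.mem_singleton] at this
    exact hdisj D hD D' hD' hne (g D) (hgmem D hD) (this ▸ hgmem D' hD')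
  have hf2inj : ∀ D ∈ ρ, ∀ D' ∈ ρ, f2 D = f2 D' → D = D' := by
    intro D hD D' hD' heq
    by_contra hne
    obtain ⟨x, hx⟩ := herase D hD
    have hx' : x ∈ f2 D' := heq ▸ hx
    exact hdisj D hD D' hD' hne x (hf2sub D hx) (hf2sub D' hx')
  set π' : Finset (Finset V) := ρ.image f1 ∪ ρ.image f2 with hπ'
  have hmem' : ∀ X, X ∈ π' ↔ ∃ D ∈ ρ, X = f1 D ∨ X = f2 D := by
    intro X
    simp only [hπ', Finset.mem_union, Finset.mem_image]
    constructor
    · rintro (⟨D, hD, rfl⟩ | ⟨D, hD, rfl⟩)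
      exacts [⟨D, hD, Or.inl rfl⟩, ⟨D, hD, Or.inr rfl⟩]
    · rintro ⟨D, hD, rfl | rfl⟩
      exacts [Or.inl ⟨D, hD, rfl⟩, Or.inr ⟨D, hD, rfl⟩]
  have hcard : π'.card = 2 * ρ.card := by
    rw [hπ', Finset.card_union_of_disjoint, Finset.card_image_of_injOn hf1inj,
      Finset.card_image_of_injOn hf2inj]
    · ring
    · rw [Finset.disjoint_left]
      rintro X hX1 hX2
      rw [Finset.mem_image] at hX1 hX2
      obtain ⟨D, hD, rfl⟩ := hX1
      obtain ⟨D', hD', heq⟩ := hX2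
      exact hf1f2 D hD D' hD' heq.symm
  have hkey : ∀ D ∈ ρ, ICCoalition G ↑(f1 D) ↑(f2 D) := by
    intro D hD
    have hind : IndepSet G (↑D : Set V) := (hρ.2 D hD).1
    obtain ⟨w, hw⟩ := herase D hD
    refine ⟨?_, hind.mono (Finset.coe_subset.mpr (hf1sub D hD)),
      hind.mono (Finset.coe_subset.mpr (hf2sub D)), ?_, ?_, ?_⟩
    · rw [Finset.disjoint_coe]
      simp only [hf1, Finset.disjoint_singleton_left]
      exact Finset.notMem_erase _ _
    · rintro ⟨_, hdom⟩
      refine not_dominating_of_miss hind (Finset.coe_subset.mpr (hf1sub D hD))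
        (Finset.mem_coe.mpr (hf2sub D hw)) ?_ hdom
      simp only [hf1, Finset.coe_singleton, Set.mem_singleton_iff]
      exact Finset.ne_of_mem_erase hw
    · rintro ⟨_, hdom⟩
      refine not_dominating_of_miss hind (Finset.coe_subset.mpr (hf2sub D))
        (Finset.mem_coe.mpr (hgmem D hD)) ?_ hdom
      simp only [Finset.mem_coe]
      exact Finset.notMem_erase _ _
    · have huni : f1 D ∪ f2 D = D := by
        simp only [hf1, hf2, ← Finset.insert_eq]
        exact Finset.insert_erase (hgmem D hD)
      have : (↑(f1 D) : Set V) ∪ ↑(f2 D) = ↑D := by rw [← Finset.coe_union, huni]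
      rw [this]
      exact hρ.2 D hD
  have hπ'part : IsPartition (V := V) π' := by
    constructor
    · intro X hX
      rw [hmem'] at hX
      obtain ⟨D, hD, rfl | rfl⟩ := hX
      · exact ⟨g D, by simp [hf1]⟩
      · exact herase D hD
    · intro v
      obtain ⟨D, ⟨hD, hvD⟩, huniq⟩ := hρ.1.2 v
      by_cases hvg : v = g D
      · refine ⟨f1 D, ⟨(hmem' _).mpr ⟨D, hD, Or.inl rfl⟩, by simp [hf1, hvg]⟩, ?_⟩
        rintro X ⟨hX, hvX⟩
        obtain ⟨D', hD', rfl | rfl⟩ := (hmem' _).mp hX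
        · have : D' = D := huniq D' ⟨hD', hf1sub D' hD' hvX⟩
          rw [this]
        · have hDD : D' = D := huniq D' ⟨hD', hf2sub D' hvX⟩
          subst hDD
          exact absurd hvg (Finset.ne_of_mem_erase hvX)
      · refine ⟨f2 D, ⟨(hmem' _).mpr ⟨D, hD, Or.inr rfl⟩,
          Finset.mem_erase.mpr ⟨hvg, hvD⟩⟩, ?_⟩
        rintro X ⟨hX, hvX⟩
        obtain ⟨D', hD', rfl | rfl⟩ := (hmem' _).mp hX
        · have hDD : D' = D := huniq D' ⟨hD', hf1sub D' hD' hvX⟩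
          subst hDD
          simp only [hf1, Finset.mem_singleton] at hvX
          exact absurd hvX hvg
        · have : D' = D := huniq D' ⟨hD', hf2sub D' hvX⟩
          rw [this]
  have hπ'ic : IsICPartition G π' := by
    refine ⟨hπ'part, ?_⟩
    intro X hX
    obtain ⟨D, hD, rfl | rfl⟩ := (hmem' _).mp hX
    · right
      refine ⟨((hkey D hD).2.2.2.1), f2 D, (hmem' _).mpr ⟨D, hD, Or.inr rfl⟩,
        (hf1f2 D hD D hD).symm, hkey D hD⟩
    · right
      exact ⟨((hkey D hD).2.2.2.2.1), f1 D, (hmem' _).mpr ⟨D, hD, Or.inl rfl⟩,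
        hf1f2 D hD D hD, icCoalition_symm (hkey D hD)⟩
  calc 2 * ρ.card = π'.card := hcard.symm
    _ ≤ IC G := card_le_IC hπ'ic

end Split
section Pullback
set_option linter.unusedSectionVars false
set_option maxHeartbeats 1000000
variable {V : Type*} [Fintype V] {G : SimpleGraph V} {W : Type} [Fintype W]

lemma pull_indepdom (f : W ↪ V) {X : Finset V}
    (hind : IndepSet G (↑X : Set V))
    (hdom : ∀ w : W, f w ∈ X ∨ ∃ w' : W, f w' ∈ X ∧ G.Adj (f w') (f w))
    {P : Finset W} (hP : ∀ w : W, w ∈ P ↔ f w ∈ X) :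
    IndepDom (G.comap f) (↑P : Set W) := by
  constructor
  · intro a ha b hb hadj
    rw [Finset.mem_coe, hP] at ha hb
    exact hind (Finset.mem_coe.mpr ha) (Finset.mem_coe.mpr hb) hadj
  · intro w
    rcases hdom w with hw | ⟨w', hw', hadj⟩
    · exact Or.inl (Finset.mem_coe.mpr ((hP w).mpr hw))
    · exact Or.inr ⟨w', Finset.mem_coe.mpr ((hP w').mpr hw'), hadj⟩

lemma pullback_bound_B3 (hIC : IC G = 4) (f : W ↪ V) (T : Finset V)
    (hTne : T.Nonempty)
    (hcover : ∀ v : V, v ∈ T ∨ ∃ i, f i = v)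
    (hfT : ∀ i, f i ∉ T)
    (hTiso : ∀ t ∈ T, ∀ z : V, ¬ G.Adj t z)
    {ρ : Finset (Finset W)} (hρ : IsIdomaticPartition (G.comap f) ρ) :
    ρ.card + 1 ≤ 4 := by
  classical
  rcases isEmpty_or_nonempty W with hW | hW
  · have : ρ = ∅ := by
      rw [← Finset.not_nonempty_iff_eq_empty]
      rintro ⟨D, hD⟩
      obtain ⟨w, -⟩ := hρ.1.1 D hD
      exact hW.elim w
    simp [this]
  obtain ⟨i0⟩ := hW
  obtain ⟨D0, ⟨hD0, hi0D0⟩, -⟩ := hρ.1.2 i0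
  obtain ⟨t0, ht0⟩ := hTne
  set π' : Finset (Finset V) := ρ.image (Finset.map f) ∪ {T} with hπ'
  have hmem' : ∀ X, X ∈ π' ↔ (∃ D ∈ ρ, X = D.map f) ∨ X = T := by
    intro X
    simp only [hπ', Finset.mem_union, Finset.mem_image, Finset.mem_singleton]
    constructor
    · rintro (⟨D, hD, rfl⟩ | rfl)
      exacts [Or.inl ⟨D, hD, rfl⟩, Or.inr rfl]
    · rintro (⟨D, hD, rfl⟩ | rfl)
      exacts [Or.inl ⟨D, hD, rfl⟩, Or.inr rfl]
  have hmapmem : ∀ (D : Finset W) (v : V), v ∈ D.map f ↔ ∃ i ∈ D, f i = v := by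
    intro D v; simp [Finset.mem_map]
  have hTnotmem : ∀ D : Finset W, T ≠ D.map f := by
    intro D heq
    rw [heq] at ht0
    obtain ⟨i, -, hi⟩ := (hmapmem D t0).mp ht0
    exact hfT i (hi ▸ (heq ▸ ht0))
  have hHind : ∀ D ∈ ρ, IndepSet G (↑(D.map f) : Set V) := by
    intro D hD u hu v hv hadj
    rw [Finset.mem_coe, hmapmem] at hu hv
    obtain ⟨i, hiD, rfl⟩ := hu
    obtain ⟨j, hjD, rfl⟩ := hv
    exact (hρ.2 D hD).1 (Finset.mem_coe.mpr hiD) (Finset.mem_coe.mpr hjD) hadj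
  have hTind : IndepSet G (↑T : Set V) := by
    intro u hu v hv hadj
    exact hTiso u hu v hadj
  have hXnotdom : ∀ D : Finset W, ¬ Dominating G (↑(D.map f) : Set V) := by
    intro D hdom
    rcases hdom t0 with h | ⟨x, hx, hadj⟩
    · rw [Finset.mem_coe, hmapmem] at h
      obtain ⟨i, -, hi⟩ := h
      exact hfT i (hi ▸ ht0)
    · exact hTiso t0 ht0 x (G.adj_symm hadj)
  have hTnotdom : ¬ Dominating G (↑T : Set V) := by
    intro hdom
    rcases hdom (f i0) with h | ⟨x, hx, hadj⟩
    · exact hfT i0 h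
    · exact hTiso x hx (f i0) hadj
  have hcoal : ∀ D ∈ ρ, ICCoalition G (↑(D.map f) : Set V) ↑T := by
    intro D hD
    refine ⟨?_, hHind D hD, hTind, fun h => hXnotdom D h.2, fun h => hTnotdom h.2, ?_, ?_⟩
    · rw [Set.disjoint_left]
      intro x hx hxT
      rw [Finset.mem_coe, hmapmem] at hx
      obtain ⟨i, -, rfl⟩ := hx
      exact hfT i hxT
    · -- IndepSet of union
      intro u hu v hv hadj
      rcases hu with hu | hu <;> rcases hv with hv | hv
      · exact hHind D hD hu hv hadj
      · exact hTiso v hv u (G.adj_symm hadj)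
      · exact hTiso u hu v hadj
      · exact hTiso u hu v hadj
    · -- Dominating union
      intro v
      rcases hcover v with hv | ⟨w, rfl⟩
      · exact Or.inl (Or.inr hv)
      · rcases (hρ.2 D hD).2 w with hw | ⟨x, hx, hadj⟩
        · exact Or.inl (Or.inl (Finset.mem_coe.mpr ((hmapmem D _).mpr ⟨w, hw, rfl⟩)))
        · exact Or.inr ⟨f x, Or.inl (Finset.mem_coe.mpr ((hmapmem D _).mpr ⟨x, hx, rfl⟩)),
            hadj⟩
  have hcard : π'.card = ρ.card + 1 := by
    rw [hπ', Finset.card_union_of_disjoint, Finset.card_image_of_injective ρ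
      (Finset.map_injective f), Finset.card_singleton]
    rw [Finset.disjoint_singleton_right]
    intro hmem
    rw [Finset.mem_image] at hmem
    obtain ⟨D, -, heq⟩ := hmem
    exact hTnotmem D heq.symm
  have hπ'part : IsPartition (V := V) π' := by
    constructor
    · intro X hX
      rcases (hmem' X).mp hX with ⟨D, hD, rfl⟩ | rfl
      · obtain ⟨w, hw⟩ := hρ.1.1 D hD
        exact ⟨f w, (hmapmem D _).mpr ⟨w, hw, rfl⟩⟩
      · exact ⟨t0, ht0⟩
    · intro v
      rcases hcover v with hv | ⟨w, rfl⟩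
      · refine ⟨T, ⟨(hmem' T).mpr (Or.inr rfl), hv⟩, ?_⟩
        rintro X ⟨hX, hvX⟩
        rcases (hmem' X).mp hX with ⟨D, hD, rfl⟩ | rfl
        · obtain ⟨i, -, rfl⟩ := (hmapmem D v).mp hvX
          exact absurd hv (hfT i)
        · rfl
      · obtain ⟨D, ⟨hD, hwD⟩, huniq⟩ := hρ.1.2 w
        refine ⟨D.map f, ⟨(hmem' _).mpr (Or.inl ⟨D, hD, rfl⟩),
          (hmapmem D _).mpr ⟨w, hwD, rfl⟩⟩, ?_⟩
        rintro X ⟨hX, hvX⟩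
        rcases (hmem' X).mp hX with ⟨D', hD', rfl⟩ | rfl
        · obtain ⟨i, hiD', hi⟩ := (hmapmem D' _).mp hvX
          have : i = w := f.injective hi
          subst this
          rw [huniq D' ⟨hD', hiD'⟩]
        · exact absurd hvX (hfT w)
  have hπ'ic : IsICPartition G π' := by
    refine ⟨hπ'part, ?_⟩
    intro X hX
    rcases (hmem' X).mp hX with ⟨D, hD, rfl⟩ | rfl
    · right
      exact ⟨fun h => hXnotdom D h.2, T, (hmem' T).mpr (Or.inr rfl),
        hTnotmem D, hcoal D hD⟩
    · right
      refine ⟨fun h => hTnotdom h.2, D0.map f, (hmem' _).mpr (Or.inl ⟨D0, hD0, rfl⟩),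
        (hTnotmem D0).symm, icCoalition_symm (hcoal D0 hD0)⟩
  have := card_le_IC hπ'ic
  rw [hIC, hcard] at this
  exact this

end Pullback
section PullbackB2
set_option linter.unusedSectionVars false
set_option maxHeartbeats 1000000
variable {V : Type*} [Fintype V] {G : SimpleGraph V} {W : Type} [Fintype W]

lemma pullback_bound_B2 (hIC : IC G = 4) (f : W ↪ V) (u : V) (T : Finset V)
    (hTne : T.Nonempty)
    (hcover : ∀ v : V, v = u ∨ v ∈ T ∨ ∃ i, f i = v)
    (hfT : ∀ i, f i ∉ T) (hfu : ∀ i, f i ≠ u) (huT : u ∉ T)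
    (huniv : ∀ w : V, w ≠ u → G.Adj u w)
    (hTadj : ∀ t ∈ T, ∀ z : V, G.Adj t z → z = u)
    {ρ : Finset (Finset W)} (hρ : IsIdomaticPartition (G.comap f) ρ) :
    ρ.card + 2 ≤ 4 := by
  classical
  rcases isEmpty_or_nonempty W with hW | hW
  · have : ρ = ∅ := by
      rw [← Finset.not_nonempty_iff_eq_empty]
      rintro ⟨D, hD⟩
      obtain ⟨w, -⟩ := hρ.1.1 D hD
      exact hW.elim w
    simp [this]
  obtain ⟨i0⟩ := hW
  obtain ⟨D0, ⟨hD0, hi0D0⟩, -⟩ := hρ.1.2 i0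
  obtain ⟨t0, ht0⟩ := hTne
  have ht0u : t0 ≠ u := fun h => huT (h ▸ ht0)
  set π' : Finset (Finset V) := ρ.image (Finset.map f) ∪ {T, {u}} with hπ'
  have hmapmem : ∀ (D : Finset W) (v : V), v ∈ D.map f ↔ ∃ i ∈ D, f i = v := by
    intro D v; simp [Finset.mem_map]
  have hmem' : ∀ X, X ∈ π' ↔ (∃ D ∈ ρ, X = D.map f) ∨ X = T ∨ X = {u} := by
    intro X
    simp only [hπ', Finset.mem_union, Finset.mem_image, Finset.mem_insert,
      Finset.mem_singleton]
    constructor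
    · rintro (⟨D, hD, rfl⟩ | rfl | rfl)
      exacts [Or.inl ⟨D, hD, rfl⟩, Or.inr (Or.inl rfl), Or.inr (Or.inr rfl)]
    · rintro (⟨D, hD, rfl⟩ | rfl | rfl)
      exacts [Or.inl ⟨D, hD, rfl⟩, Or.inr (Or.inl rfl), Or.inr (Or.inr rfl)]
  have hTnotmem : ∀ D : Finset W, T ≠ D.map f := by
    intro D heq
    have := heq ▸ ht0
    obtain ⟨i, -, hi⟩ := (hmapmem D t0).mp this
    exact hfT i (hi ▸ ht0)
  have hunotmem : ∀ D : Finset W, ({u} : Finset V) ≠ D.map f := by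
    intro D heq
    have : u ∈ D.map f := heq ▸ Finset.mem_singleton_self u
    obtain ⟨i, -, hi⟩ := (hmapmem D u).mp this
    exact hfu i hi
  have hTu : T ≠ ({u} : Finset V) := by
    intro heq
    rw [heq] at ht0
    exact ht0u (Finset.mem_singleton.mp ht0)
  have hHind : ∀ D ∈ ρ, IndepSet G (↑(D.map f) : Set V) := by
    intro D hD x hx y hy hadj
    rw [Finset.mem_coe, hmapmem] at hx hy
    obtain ⟨i, hiD, rfl⟩ := hx
    obtain ⟨j, hjD, rfl⟩ := hy
    exact (hρ.2 D hD).1 (Finset.mem_coe.mpr hiD) (Finset.mem_coe.mpr hjD) hadj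
  have hTind : IndepSet G (↑T : Set V) := by
    intro x hx y hy hadj
    exact huT ((hTadj x hx y hadj) ▸ hy)
  have hXnotdom : ∀ D : Finset W, ¬ Dominating G (↑(D.map f) : Set V) := by
    intro D hdom
    rcases hdom t0 with h | ⟨x, hx, hadj⟩
    · rw [Finset.mem_coe, hmapmem] at h
      obtain ⟨i, -, hi⟩ := h
      exact hfT i (hi ▸ ht0)
    · have : x = u := hTadj t0 ht0 x (G.adj_symm hadj)
      rw [Finset.mem_coe, hmapmem] at hx
      obtain ⟨i, -, hi⟩ := hx
      exact hfu i (hi.trans this)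
  have hTnotdom : ¬ Dominating G (↑T : Set V) := by
    intro hdom
    rcases hdom (f i0) with h | ⟨x, hx, hadj⟩
    · exact hfT i0 h
    · exact hfu i0 (hTadj x hx (f i0) hadj ▸ rfl)
  have hcoal : ∀ D ∈ ρ, ICCoalition G (↑(D.map f) : Set V) ↑T := by
    intro D hD
    refine ⟨?_, hHind D hD, hTind, fun h => hXnotdom D h.2, fun h => hTnotdom h.2, ?_, ?_⟩
    · rw [Set.disjoint_left]
      intro x hx hxT
      rw [Finset.mem_coe, hmapmem] at hx
      obtain ⟨i, -, rfl⟩ := hx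
      exact hfT i hxT
    · intro x hx y hy hadj
      rcases hx with hx | hx <;> rcases hy with hy | hy
      · exact hHind D hD hx hy hadj
      · -- x in map, y in T
        have : x = u := hTadj y hy x (G.adj_symm hadj)
        rw [Finset.mem_coe, hmapmem] at hx
        obtain ⟨i, -, hi⟩ := hx
        exact hfu i (hi.trans this)
      · have : y = u := hTadj x hx y hadj
        rw [Finset.mem_coe, hmapmem] at hy
        obtain ⟨i, -, hi⟩ := hy
        exact hfu i (hi.trans this)
      · exact hTind hx hy hadj
    · intro v
      rcases hcover v with rfl | hv | ⟨w, rfl⟩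
      · exact Or.inr ⟨t0, Or.inr ht0, G.adj_symm (huniv t0 ht0u)⟩
      · exact Or.inl (Or.inr hv)
      · rcases (hρ.2 D hD).2 w with hw | ⟨x, hx, hadj⟩
        · exact Or.inl (Or.inl (Finset.mem_coe.mpr ((hmapmem D _).mpr ⟨w, hw, rfl⟩)))
        · exact Or.inr ⟨f x, Or.inl (Finset.mem_coe.mpr ((hmapmem D _).mpr ⟨x, hx, rfl⟩)),
            hadj⟩
  have hcard : π'.card = ρ.card + 2 := by
    have h2 : ({T, {u}} : Finset (Finset V)).card = 2 := by
      rw [Finset.card_insert_of_notMem (by simpa using hTu), Finset.card_singleton]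
    rw [hπ', Finset.card_union_of_disjoint, Finset.card_image_of_injective ρ
      (Finset.map_injective f), h2]
    rw [Finset.disjoint_right]
    intro X hX hX2
    rw [Finset.mem_insert, Finset.mem_singleton] at hX
    rw [Finset.mem_image] at hX2
    obtain ⟨D, -, heq⟩ := hX2
    rcases hX with rfl | rfl
    exacts [hTnotmem D heq.symm, hunotmem D heq.symm]
  have hπ'part : IsPartition (V := V) π' := by
    constructor
    · intro X hX
      rcases (hmem' X).mp hX with ⟨D, hD, rfl⟩ | rfl | rfl
      · obtain ⟨w, hw⟩ := hρ.1.1 D hD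
        exact ⟨f w, (hmapmem D _).mpr ⟨w, hw, rfl⟩⟩
      · exact ⟨t0, ht0⟩
      · exact ⟨u, Finset.mem_singleton_self u⟩
    · intro v
      rcases hcover v with rfl | hv | ⟨w, rfl⟩
      · refine ⟨{v}, ⟨(hmem' _).mpr (Or.inr (Or.inr rfl)), Finset.mem_singleton_self v⟩, ?_⟩
        rintro X ⟨hX, hvX⟩
        rcases (hmem' X).mp hX with ⟨D, hD, rfl⟩ | rfl | rfl
        · obtain ⟨i, -, hi⟩ := (hmapmem D v).mp hvX
          exact absurd hi (hfu i)
        · exact absurd hvX huT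
        · rfl
      · have hvu : v ≠ u := fun h => huT (h ▸ hv)
        refine ⟨T, ⟨(hmem' T).mpr (Or.inr (Or.inl rfl)), hv⟩, ?_⟩
        rintro X ⟨hX, hvX⟩
        rcases (hmem' X).mp hX with ⟨D, hD, rfl⟩ | rfl | rfl
        · obtain ⟨i, -, rfl⟩ := (hmapmem D v).mp hvX
          exact absurd hv (hfT i)
        · rfl
        · exact absurd (Finset.mem_singleton.mp hvX) hvu
      · obtain ⟨D, ⟨hD, hwD⟩, huniq⟩ := hρ.1.2 w
        refine ⟨D.map f, ⟨(hmem' _).mpr (Or.inl ⟨D, hD, rfl⟩),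
          (hmapmem D _).mpr ⟨w, hwD, rfl⟩⟩, ?_⟩
        rintro X ⟨hX, hvX⟩
        rcases (hmem' X).mp hX with ⟨D', hD', rfl⟩ | rfl | rfl
        · obtain ⟨i, hiD', hi⟩ := (hmapmem D' _).mp hvX
          have : i = w := f.injective hi
          subst this
          rw [huniq D' ⟨hD', hiD'⟩]
        · exact absurd hvX (hfT w)
        · exact absurd (Finset.mem_singleton.mp hvX) (hfu w)
  have hπ'ic : IsICPartition G π' := by
    refine ⟨hπ'part, ?_⟩
    intro X hX
    rcases (hmem' X).mp hX with ⟨D, hD, rfl⟩ | rfl | rfl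
    · right
      exact ⟨fun h => hXnotdom D h.2, T, (hmem' T).mpr (Or.inr (Or.inl rfl)),
        hTnotmem D, hcoal D hD⟩
    · right
      refine ⟨fun h => hTnotdom h.2, D0.map f, (hmem' _).mpr (Or.inl ⟨D0, hD0, rfl⟩),
        (hTnotmem D0).symm, icCoalition_symm (hcoal D0 hD0)⟩
    · left
      refine ⟨u, by simp, ?_⟩
      intro v
      by_cases hvu : v = u
      · exact Or.inl (by simp [hvu])
      · exact Or.inr ⟨u, by simp, huniv v hvu⟩
  have := card_le_IC hπ'ic
  rw [hIC, hcard] at this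
  exact this

end PullbackB2
section Payloads
set_option linter.unusedSectionVars false
set_option maxHeartbeats 1000000

structure Ctx {V : Type*} (G : SimpleGraph V) (π : Finset (Finset V))
    (A B C D : Finset V) : Prop where
  hπ : IsICPartition G π
  hA : A ∈ π
  hB : B ∈ π
  hC : C ∈ π
  hD : D ∈ π
  hall : ∀ E ∈ π, E = A ∨ E = B ∨ E = C ∨ E = D
  hAB : A ≠ B
  hAC : A ≠ C
  hAD : A ≠ D
  hBC : B ≠ C
  hBD : B ≠ D
  hCD : C ≠ D

variable {V : Type*} [Fintype V] {G : SimpleGraph V} {π : Finset (Finset V)}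
  {A B C D : Finset V}

lemma Ctx.cover (h : Ctx G π A B C D) (v : V) : v ∈ A ∨ v ∈ B ∨ v ∈ C ∨ v ∈ D := by
  obtain ⟨E, ⟨hE, hvE⟩, -⟩ := h.hπ.1.2 v
  rcases h.hall E hE with rfl | rfl | rfl | rfl <;> tauto

lemma Ctx.partner (h : Ctx G π A B C D) {X : Finset V} (hX : X ∈ π)
    (hnX : ¬ DomSingleton G X) :
    ¬ IndepDom G (X : Set V) ∧ ∃ Y ∈ π, Y ≠ X ∧ ICCoalition G (X : Set V) (Y : Set V) := by
  rcases h.hπ.2 X hX with hP | h2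
  · exact absurd hP hnX
  · exact h2

lemma payload_K4 (ctx : Ctx G π A B C D)
    (hPA : DomSingleton G A) (hPB : DomSingleton G B) (hPC : DomSingleton G C)
    (hPD : DomSingleton G D) :
    Nonempty (G ≃g (⊤ : SimpleGraph (Fin 4))) := by
  classical
  obtain ⟨a, hAa, hadom⟩ := hPA
  obtain ⟨b, hBb, hbdom⟩ := hPB
  obtain ⟨c, hCc, hcdom⟩ := hPC
  obtain ⟨d, hDd, hddom⟩ := hPD
  have memA : ∀ v ∈ A, v = a := fun v hv => by
    have : v ∈ (A : Set V) := hv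
    rwa [hAa, Set.mem_singleton_iff] at this
  have memB : ∀ v ∈ B, v = b := fun v hv => by
    have : v ∈ (B : Set V) := hv
    rwa [hBb, Set.mem_singleton_iff] at this
  have memC : ∀ v ∈ C, v = c := fun v hv => by
    have : v ∈ (C : Set V) := hv
    rwa [hCc, Set.mem_singleton_iff] at this
  have memD : ∀ v ∈ D, v = d := fun v hv => by
    have : v ∈ (D : Set V) := hv
    rwa [hDd, Set.mem_singleton_iff] at this
  have hcl : ∀ v : V, v = a ∨ v = b ∨ v = c ∨ v = d := by
    intro v
    rcases ctx.cover v with h | h | h | h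
    exacts [Or.inl (memA v h), Or.inr (Or.inl (memB v h)),
      Or.inr (Or.inr (Or.inl (memC v h))), Or.inr (Or.inr (Or.inr (memD v h)))]
  have hEq : ∀ (X Y : Finset V) (x y : V), (X : Set V) = {x} → (Y : Set V) = {y} →
      x = y → X = Y := by
    intro X Y x y hX hY hxy
    apply Finset.coe_injective
    rw [hX, hY, hxy]
  have hab : a ≠ b := fun h => ctx.hAB (hEq A B a b hAa hBb h)
  have hac : a ≠ c := fun h => ctx.hAC (hEq A C a c hAa hCc h)
  have had : a ≠ d := fun h => ctx.hAD (hEq A D a d hAa hDd h)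
  have hbc : b ≠ c := fun h => ctx.hBC (hEq B C b c hBb hCc h)
  have hbd : b ≠ d := fun h => ctx.hBD (hEq B D b d hBb hDd h)
  have hcd : c ≠ d := fun h => ctx.hCD (hEq C D c d hCc hDd h)
  have huniv : ∀ (v w : V), v ≠ w → G.Adj v w := by
    intro v w hvw
    rcases hcl v with rfl | rfl | rfl | rfl
    · exact universal_of_dom_singleton (hAa ▸ hadom) (Ne.symm hvw)
    · exact universal_of_dom_singleton (hBb ▸ hbdom) (Ne.symm hvw)
    · exact universal_of_dom_singleton (hCc ▸ hcdom) (Ne.symm hvw)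
    · exact universal_of_dom_singleton (hDd ▸ hddom) (Ne.symm hvw)
  have hGtop : G = (⊤ : SimpleGraph V) := by
    ext x y
    simp only [SimpleGraph.top_adj]
    exact ⟨fun h => h.ne, fun h => huniv x y h⟩
  have hcardV : Fintype.card V = 4 := by
    have huniveq : (Finset.univ : Finset V) = {a, b, c, d} := by
      ext v
      simp only [Finset.mem_univ, true_iff, Finset.mem_insert, Finset.mem_singleton]
      exact hcl v
    rw [← Finset.card_univ, huniveq]
    rw [Finset.card_insert_of_notMem (by simp [hab, hac, had]),
      Finset.card_insert_of_notMem (by simp [hbc, hbd]),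
      Finset.card_insert_of_notMem (by simp [hcd]), Finset.card_singleton]
  rw [hGtop]
  exact ⟨SimpleGraph.Iso.completeGraph (Fintype.equivFinOfCardEq hcardV)⟩

lemma payload_3P (ctx : Ctx G π A B C D)
    (hPA : DomSingleton G A) (hPB : DomSingleton G B) (hPC : DomSingleton G C)
    (hnD : ¬ DomSingleton G D) : False := by
  obtain ⟨-, Y, hY, hYD, coal⟩ := ctx.partner ctx.hD hnD
  have hYnot : ¬ IndepDom G (Y : Set V) := coal.2.2.2.2.1
  rcases ctx.hall Y hY with rfl | rfl | rfl | rfl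
  · exact hYnot hPA.indepDom
  · exact hYnot hPB.indepDom
  · exact hYnot hPC.indepDom
  · exact hYD rfl

end Payloads
section JoinHelpers
set_option maxHeartbeats 1000000
variable {α β : Type*} {G : SimpleGraph α} {H : SimpleGraph β}

lemma graphJoin_adj_inl_inl (a b : α) :
    (graphJoin G H).Adj (Sum.inl a) (Sum.inl b) ↔ G.Adj a b := by
  simp only [graphJoin, SimpleGraph.compl_adj, SimpleGraph.sum_adj, ne_eq, Sum.inl.injEq,
    SimpleGraph.compl_adj]
  constructor
  · rintro ⟨hne, h⟩
    rcases not_and_or.mp h with h1 | h2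
    · exact absurd hne (not_not.mpr (not_not.mp h1))
    · exact not_not.mp h2
  · intro hG
    exact ⟨hG.ne, fun h => h.2 hG⟩

lemma graphJoin_adj_inl_inr (a : α) (b : β) :
    (graphJoin G H).Adj (Sum.inl a) (Sum.inr b) := by
  simp only [graphJoin, SimpleGraph.compl_adj, SimpleGraph.sum_adj, ne_eq]
  exact ⟨by simp, fun h => h⟩

lemma graphJoin_adj_inr_inl (a : β) (b : α) :
    (graphJoin G H).Adj (Sum.inr a) (Sum.inl b) := by
  simp only [graphJoin, SimpleGraph.compl_adj, SimpleGraph.sum_adj, ne_eq]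
  exact ⟨by simp, fun h => h⟩

lemma graphJoin_adj_inr_inr (a b : β) :
    (graphJoin G H).Adj (Sum.inr a) (Sum.inr b) ↔ H.Adj a b := by
  simp only [graphJoin, SimpleGraph.compl_adj, SimpleGraph.sum_adj, ne_eq, Sum.inr.injEq,
    SimpleGraph.compl_adj]
  constructor
  · rintro ⟨hne, h⟩
    rcases not_and_or.mp h with h1 | h2
    · exact absurd hne (not_not.mpr (not_not.mp h1))
    · exact not_not.mp h2
  · intro hG
    exact ⟨hG.ne, fun h => h.2 hG⟩

end JoinHelpers
section PayloadK2
set_option linter.unusedSectionVars false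
set_option maxHeartbeats 1000000
variable {V : Type*} [Fintype V] {G : SimpleGraph V} {π : Finset (Finset V)}
  {A B C D : Finset V}

lemma payload_K2 (ctx : Ctx G π A B C D)
    (hPA : DomSingleton G A) (hPB : DomSingleton G B)
    (hnC : ¬ DomSingleton G C) (hnD : ¬ DomSingleton G D) :
    ∃ m : ℕ, 2 ≤ m ∧
      Nonempty (G ≃g graphJoin (⊤ : SimpleGraph (Fin 2)) (⊥ : SimpleGraph (Fin m))) := by
  classical
  obtain ⟨a, hAa, hadom⟩ := hPA
  obtain ⟨b, hBb, hbdom⟩ := hPB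
  have memA : ∀ v ∈ A, v = a := fun v hv => by
    have : v ∈ (A : Set V) := hv
    rwa [hAa, Set.mem_singleton_iff] at this
  have memB : ∀ v ∈ B, v = b := fun v hv => by
    have : v ∈ (B : Set V) := hv
    rwa [hBb, Set.mem_singleton_iff] at this
  have haA : a ∈ A := by
    rw [← Finset.mem_coe, hAa]; exact Set.mem_singleton a
  have hbB : b ∈ B := by
    rw [← Finset.mem_coe, hBb]; exact Set.mem_singleton b
  have hab : a ≠ b := by
    intro h
    exact ctx.hAB (Finset.coe_injective (by rw [hAa, hBb, h]))
  have ua : ∀ w, w ≠ a → G.Adj a w := fun w hw =>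
    universal_of_dom_singleton (hAa ▸ hadom) hw
  have ub : ∀ w, w ≠ b → G.Adj b w := fun w hw =>
    universal_of_dom_singleton (hBb ▸ hbdom) hw
  obtain ⟨hCni, Y, hY, hYC, coalC⟩ := ctx.partner ctx.hC hnC
  have coal : ICCoalition G (C : Set V) (D : Set V) := by
    rcases ctx.hall Y hY with rfl | rfl | rfl | rfl
    · exact absurd (DomSingleton.indepDom ⟨a, hAa, hadom⟩) coalC.2.2.2.2.1
    · exact absurd (DomSingleton.indepDom ⟨b, hBb, hbdom⟩) coalC.2.2.2.2.1
    · exact absurd rfl hYC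
    · exact coalC
  have hCDind : IndepSet G ((C : Set V) ∪ (D : Set V)) := coal.2.2.2.2.2.1
  have haC : a ∉ C := class_nonmem ctx.hπ.1 ctx.hA ctx.hC ctx.hAC haA
  have haD : a ∉ D := class_nonmem ctx.hπ.1 ctx.hA ctx.hD ctx.hAD haA
  have hbC : b ∉ C := class_nonmem ctx.hπ.1 ctx.hB ctx.hC ctx.hBC hbB
  have hbD : b ∉ D := class_nonmem ctx.hπ.1 ctx.hB ctx.hD ctx.hBD hbB
  set S : Finset V := {a, b} with hS
  have hSmem : ∀ x : V, x ∈ S ↔ x = a ∨ x = b := by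
    intro x; simp [hS]
  have hrest : ∀ x : V, x ∉ S → x ∈ C ∨ x ∈ D := by
    intro x hx
    rcases ctx.cover x with h | h | h | h
    · exact absurd ((hSmem x).mpr (Or.inl (memA x h))) hx
    · exact absurd ((hSmem x).mpr (Or.inr (memB x h))) hx
    · exact Or.inl h
    · exact Or.inr h
  have hSuniv : ∀ x ∈ S, ∀ y : V, y ≠ x → G.Adj x y := by
    intro x hx y hy
    rcases (hSmem x).mp hx with rfl | rfl
    · exact ua y hy
    · exact ub y hy
  have hrestind : ∀ x y : V, x ∉ S → y ∉ S → ¬ G.Adj x y := by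
    intro x y hx hy
    have hx' : x ∈ (C : Set V) ∪ (D : Set V) := by
      rcases hrest x hx with h | h
      exacts [Or.inl (Finset.mem_coe.mpr h), Or.inr (Finset.mem_coe.mpr h)]
    have hy' : y ∈ (C : Set V) ∪ (D : Set V) := by
      rcases hrest y hy with h | h
      exacts [Or.inl (Finset.mem_coe.mpr h), Or.inr (Finset.mem_coe.mpr h)]
    exact hCDind hx' hy'
  have hcardS : Fintype.card {x : V // x ∈ S} = 2 := by
    rw [Fintype.card_coe]
    rw [hS, Finset.card_insert_of_notMem (by simp [hab]), Finset.card_singleton]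
  obtain ⟨c0, hc0⟩ := ctx.hπ.1.1 C ctx.hC
  obtain ⟨d0, hd0⟩ := ctx.hπ.1.1 D ctx.hD
  have hc0S : c0 ∉ S := by
    rw [hSmem]
    rintro (rfl | rfl)
    exacts [haC hc0, hbC hc0]
  have hd0S : d0 ∉ S := by
    rw [hSmem]
    rintro (rfl | rfl)
    exacts [haD hd0, hbD hd0]
  have hc0d0 : c0 ≠ d0 := fun h =>
    class_nonmem ctx.hπ.1 ctx.hC ctx.hD ctx.hCD hc0 (h ▸ hd0)
  set m := Fintype.card {x : V // ¬ x ∈ S} with hm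
  have hm2 : 2 ≤ m := by
    rw [hm]
    have : Nontrivial {x : V // ¬ x ∈ S} :=
      ⟨⟨⟨c0, hc0S⟩, ⟨d0, hd0S⟩, fun h => hc0d0 (congrArg Subtype.val h)⟩⟩
    exact Fintype.one_lt_card_iff_nontrivial.mpr this
  set e1 : {x : V // x ∈ S} ≃ Fin 2 := Fintype.equivFinOfCardEq hcardS with he1
  set e2 : {x : V // ¬ x ∈ S} ≃ Fin m := Fintype.equivFinOfCardEq rfl with he2
  set e : V ≃ (Fin 2 ⊕ Fin m) :=
    (Equiv.sumCompl (· ∈ S)).symm.trans (Equiv.sumCongr e1 e2) with he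
  have ex : ∀ (x : V) (hx : x ∈ S), e x = Sum.inl (e1 ⟨x, hx⟩) := by
    intro x hx
    simp only [he, Equiv.trans_apply, Equiv.sumCompl_symm_apply_of_pos hx,
      Equiv.sumCongr_apply, Sum.map_inl]
  have ex' : ∀ (x : V) (hx : ¬ x ∈ S), e x = Sum.inr (e2 ⟨x, hx⟩) := by
    intro x hx
    simp only [he, Equiv.trans_apply, Equiv.sumCompl_symm_apply_of_neg hx,
      Equiv.sumCongr_apply, Sum.map_inr]
  refine ⟨m, hm2, ⟨⟨e, @fun x y => ?_⟩⟩⟩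
  by_cases hx : x ∈ S <;> by_cases hy : y ∈ S
  · rw [ex x hx, ex y hy, graphJoin_adj_inl_inl, SimpleGraph.top_adj]
    have hiff : e1 ⟨x, hx⟩ ≠ e1 ⟨y, hy⟩ ↔ x ≠ y := by
      rw [Ne, Equiv.apply_eq_iff_eq, Subtype.mk.injEq]
    rw [hiff]
    exact ⟨fun hne => hSuniv x hx y (Ne.symm hne), fun h => h.ne⟩
  · rw [ex x hx, ex' y hy]
    exact iff_of_true (graphJoin_adj_inl_inr _ _)
      (hSuniv x hx y (fun h => hy (h ▸ hx)))
  · rw [ex' x hx, ex y hy]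
    exact iff_of_true (graphJoin_adj_inr_inl _ _)
      ((hSuniv y hy x (fun h => hx (h ▸ hy))).symm)
  · rw [ex' x hx, ex' y hy, graphJoin_adj_inr_inr]
    exact iff_of_false (by simp) (hrestind x y hx hy)
end PayloadK2
section PayloadK1
set_option linter.unusedSectionVars false
set_option maxHeartbeats 4000000
variable {V : Type*} [Fintype V] {G : SimpleGraph V} {π : Finset (Finset V)}
  {A Y C D : Finset V}

lemma payload_K1' (hIC : IC G = 4) (ctx : Ctx G π A Y C D) (hPA : DomSingleton G A)
    (cYC : ICCoalition G (Y : Set V) (C : Set V))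
    (cYD : ICCoalition G (Y : Set V) (D : Set V)) :
    ∃ (W : Type) (B : SimpleGraph W), InB2 B ∧
      Nonempty (G ≃g graphJoin (⊤ : SimpleGraph (Fin 1)) B) := by
  classical
  obtain ⟨u, hAu, hudom⟩ := hPA
  have memA : ∀ v ∈ A, v = u := fun v hv => by
    have : v ∈ (A : Set V) := hv
    rwa [hAu, Set.mem_singleton_iff] at this
  have huA : u ∈ A := by rw [← Finset.mem_coe, hAu]; exact Set.mem_singleton u
  have ua : ∀ w, w ≠ u → G.Adj u w := fun w hw =>
    universal_of_dom_singleton (hAu ▸ hudom) hw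
  have huY : u ∉ Y := class_nonmem ctx.hπ.1 ctx.hA ctx.hB ctx.hAB huA
  have huC : u ∉ C := class_nonmem ctx.hπ.1 ctx.hA ctx.hC ctx.hAC huA
  have huD : u ∉ D := class_nonmem ctx.hπ.1 ctx.hA ctx.hD ctx.hAD huA
  have hYC : ∀ v ∈ Y, v ∉ C := fun v hv =>
    class_nonmem ctx.hπ.1 ctx.hB ctx.hC ctx.hBC hv
  have hYD : ∀ v ∈ Y, v ∉ D := fun v hv =>
    class_nonmem ctx.hπ.1 ctx.hB ctx.hD ctx.hBD hv
  have hCDd : ∀ v ∈ C, v ∉ D := fun v hv =>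
    class_nonmem ctx.hπ.1 ctx.hC ctx.hD ctx.hCD hv
  have hYCind : IndepSet G ((Y : Set V) ∪ (C : Set V)) := cYC.2.2.2.2.2.1
  have hYDind : IndepSet G ((Y : Set V) ∪ (D : Set V)) := cYD.2.2.2.2.2.1
  have hYCdom : Dominating G ((Y : Set V) ∪ (C : Set V)) := cYC.2.2.2.2.2.2
  have hYDdom : Dominating G ((Y : Set V) ∪ (D : Set V)) := cYD.2.2.2.2.2.2
  have hYind : IndepSet G (Y : Set V) := cYC.2.1
  have hCind : IndepSet G (C : Set V) := cYC.2.2.1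
  have hDind : IndepSet G (D : Set V) := cYD.2.2.1
  have hYonly : ∀ y ∈ Y, ∀ z : V, G.Adj y z → z = u := by
    intro y hy z hadj
    rcases ctx.cover z with h | h | h | h
    · exact memA z h
    · exact absurd hadj (hYind (Finset.mem_coe.mpr hy) (Finset.mem_coe.mpr h))
    · exact absurd hadj (hYCind (Or.inl (Finset.mem_coe.mpr hy))
        (Or.inr (Finset.mem_coe.mpr h)))
    · exact absurd hadj (hYDind (Or.inl (Finset.mem_coe.mpr hy))
        (Or.inr (Finset.mem_coe.mpr h)))
  have hCtoD : ∀ c ∈ C, ∃ d ∈ D, G.Adj c d := by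
    intro c hc
    rcases hYDdom c with (h | h) | ⟨x, hx | hx, hadj⟩
    · exact absurd hc (hYC c (Finset.mem_coe.mp h))
    · exact absurd (Finset.mem_coe.mp h) (hCDd c hc)
    · exact absurd huC (fun hh => hh ((hYonly x (Finset.mem_coe.mp hx) c hadj) ▸ hc))
    · exact ⟨x, Finset.mem_coe.mp hx, G.adj_symm hadj⟩
  have hDtoC : ∀ d ∈ D, ∃ c ∈ C, G.Adj d c := by
    intro d hd
    rcases hYCdom d with (h | h) | ⟨x, hx | hx, hadj⟩
    · exact absurd hd (hYD d (Finset.mem_coe.mp h))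
    · exact absurd hd (hCDd d (Finset.mem_coe.mp h))
    · exact absurd huD (fun hh => hh ((hYonly x (Finset.mem_coe.mp hx) d hadj) ▸ hd))
    · exact ⟨x, Finset.mem_coe.mp hx, G.adj_symm hadj⟩
  set S : Finset V := C ∪ D with hSdef
  have hSiff : ∀ x : V, x ∈ S ↔ x ∈ C ∨ x ∈ D := by intro x; simp [hSdef]
  have huS : u ∉ S := by rw [hSiff]; tauto
  have hYS : ∀ y ∈ Y, y ∉ S := by
    intro y hy
    rw [hSiff]
    push_neg
    exact ⟨hYC y hy, hYD y hy⟩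
  -- the middle block
  set h : ℕ := Fintype.card {z : {x : V // ¬ x = u} // z.1 ∈ S} with hh
  set eS : {z : {x : V // ¬ x = u} // z.1 ∈ S} ≃ Fin h := Fintype.equivFin _ with heS
  set f : Fin h → V := fun i => ((eS.symm i).1 : {x : V // ¬ x = u}).1 with hf
  have hfinj : Function.Injective f := by
    intro i j hij
    have : (eS.symm i) = (eS.symm j) := Subtype.ext (Subtype.ext hij)
    exact eS.symm.injective this
  set femb : Fin h ↪ V := ⟨f, hfinj⟩ with hfemb
  have hfS : ∀ i, f i ∈ S := fun i => (eS.symm i).2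
  have hfu : ∀ i, f i ≠ u := fun i => ((eS.symm i).1).2
  have hSf : ∀ v : V, v ∈ S → ∃ i, f i = v := by
    intro v hv
    have hvu : ¬ v = u := fun hh => huS (hh ▸ hv)
    refine ⟨eS ⟨⟨v, hvu⟩, hv⟩, ?_⟩
    show (((eS.symm (eS ⟨⟨v, hvu⟩, hv⟩)) : {x : V // ¬ x = u}) : V) = v
    rw [Equiv.symm_apply_apply]
  set mY : ℕ := Fintype.card {z : {x : V // ¬ x = u} // ¬ z.1 ∈ S} with hmY
  set eT : {z : {x : V // ¬ x = u} // ¬ z.1 ∈ S} ≃ Fin mY := Fintype.equivFin _ with heT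
  obtain ⟨y0, hy0⟩ := ctx.hπ.1.1 Y ctx.hB
  have hy0u : ¬ y0 = u := fun hh => huY (hh ▸ hy0)
  have hm1 : 1 ≤ mY := by
    rw [hmY]
    exact Fintype.card_pos_iff.mpr ⟨⟨⟨y0, hy0u⟩, hYS y0 hy0⟩⟩
  -- third-block membership
  have hTmem : ∀ x : V, ¬ x = u → ¬ x ∈ S → x ∈ Y := by
    intro x hxu hxS
    rcases ctx.cover x with hxx | hxx | hxx | hxx
    · exact absurd (memA x hxx) hxu
    · exact hxx
    · exact absurd ((hSiff x).mpr (Or.inl hxx)) hxS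
    · exact absurd ((hSiff x).mpr (Or.inr hxx)) hxS
  set H : SimpleGraph (Fin h) := SimpleGraph.comap (⇑femb) G with hH
  have hHadj : ∀ i j, H.Adj i j ↔ G.Adj (f i) (f j) := by
    intro i j; rw [hH]; rfl
  -- min degree of H
  have hHmin : ∀ i : Fin h, ∃ j : Fin h, H.Adj i j := by
    intro i
    rcases (hSiff (f i)).mp (hfS i) with hfi | hfi
    · obtain ⟨d, hd, hadj⟩ := hCtoD (f i) hfi
      obtain ⟨j, hj⟩ := hSf d ((hSiff d).mpr (Or.inr hd))
      exact ⟨j, (hHadj i j).mpr (hj ▸ hadj)⟩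
    · obtain ⟨c, hc, hadj⟩ := hDtoC (f i) hfi
      obtain ⟨j, hj⟩ := hSf c ((hSiff c).mpr (Or.inl hc))
      exact ⟨j, (hHadj i j).mpr (hj ▸ hadj)⟩
  -- 2-colorability of H
  have hHcol : H.Colorable 2 := by
    refine ⟨SimpleGraph.Coloring.mk (fun i => if f i ∈ C then 0 else 1) ?_⟩
    intro i j hadj
    rw [hHadj] at hadj
    by_cases hi : f i ∈ C <;> by_cases hj : f j ∈ C
    · exact absurd hadj (hCind (Finset.mem_coe.mpr hi) (Finset.mem_coe.mpr hj))
    · simp [hi, hj]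
    · simp [hi, hj]
    · have hi' : f i ∈ D := ((hSiff _).mp (hfS i)).resolve_left hi
      have hj' : f j ∈ D := ((hSiff _).mp (hfS j)).resolve_left hj
      exact absurd hadj (hDind (Finset.mem_coe.mpr hi') (Finset.mem_coe.mpr hj'))
  -- idNum H = 2
  set PC : Finset (Fin h) := Finset.univ.filter (fun i => f i ∈ C) with hPC
  set PD : Finset (Fin h) := Finset.univ.filter (fun i => f i ∈ D) with hPD
  have hPCmem : ∀ i, i ∈ PC ↔ f i ∈ C := by intro i; simp [hPC]
  have hPDmem : ∀ i, i ∈ PD ↔ f i ∈ D := by intro i; simp [hPD]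
  obtain ⟨c0, hc0⟩ := ctx.hπ.1.1 C ctx.hC
  obtain ⟨d0, hd0⟩ := ctx.hπ.1.1 D ctx.hD
  obtain ⟨ic0, hic0⟩ := hSf c0 ((hSiff c0).mpr (Or.inl hc0))
  obtain ⟨id0, hid0⟩ := hSf d0 ((hSiff d0).mpr (Or.inr hd0))
  have hPCne : PC.Nonempty := ⟨ic0, (hPCmem ic0).mpr (hic0 ▸ hc0)⟩
  have hPDne : PD.Nonempty := ⟨id0, (hPDmem id0).mpr (hid0 ▸ hd0)⟩
  have hPCPD : PC ≠ PD := by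
    intro heq
    obtain ⟨i, hi⟩ := hPCne
    have h1 : f i ∈ C := (hPCmem i).mp hi
    have h2 : f i ∈ D := (hPDmem i).mp (heq ▸ hi)
    exact hCDd (f i) h1 h2
  have hidomPC : IndepDom H (PC : Set (Fin h)) := by
    rw [hH]
    refine pull_indepdom femb hCind ?_ hPCmem
    intro w
    rcases (hSiff (f w)).mp (hfS w) with hw | hw
    · exact Or.inl hw
    · obtain ⟨c, hc, hadj⟩ := hDtoC (f w) hw
      obtain ⟨j, hj⟩ := hSf c ((hSiff c).mpr (Or.inl hc))
      refine Or.inr ⟨j, ?_, ?_⟩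
      · show f j ∈ C
        rw [hj]; exact hc
      · show G.Adj (f j) (f w)
        rw [hj]; exact G.adj_symm hadj
  have hidomPD : IndepDom H (PD : Set (Fin h)) := by
    rw [hH]
    refine pull_indepdom femb hDind ?_ hPDmem
    intro w
    rcases (hSiff (f w)).mp (hfS w) with hw | hw
    · obtain ⟨d, hd, hadj⟩ := hCtoD (f w) hw
      obtain ⟨j, hj⟩ := hSf d ((hSiff d).mpr (Or.inr hd))
      refine Or.inr ⟨j, ?_, ?_⟩
      · show f j ∈ D
        rw [hj]; exact hd
      · show G.Adj (f j) (f w)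
        rw [hj]; exact G.adj_symm hadj
    · exact Or.inl hw
  have hidom2 : IsIdomaticPartition H ({PC, PD} : Finset (Finset (Fin h))) := by
    constructor
    constructor
    · intro X hX
      rcases Finset.mem_insert.mp hX with rfl | hX
      · exact hPCne
      · rw [Finset.mem_singleton.mp hX]
        exact hPDne
    · intro i
      rcases (hSiff (f i)).mp (hfS i) with hi | hi
      · refine ⟨PC, ⟨Finset.mem_insert_self _ _, (hPCmem i).mpr hi⟩, ?_⟩
        rintro X ⟨hX, hiX⟩
        rcases Finset.mem_insert.mp hX with rfl | hX
        · rfl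
        · rw [Finset.mem_singleton.mp hX] at hiX ⊢
          exact absurd ((hPDmem i).mp hiX) (fun hh => hCDd (f i) hi hh)
      · refine ⟨PD, ⟨Finset.mem_insert_of_mem (Finset.mem_singleton_self _),
          (hPDmem i).mpr hi⟩, ?_⟩
        rintro X ⟨hX, hiX⟩
        rcases Finset.mem_insert.mp hX with rfl | hX
        · exact absurd ((hPCmem i).mp hiX) (fun hh => hCDd (f i) hh hi)
        · rw [Finset.mem_singleton.mp hX]
    · intro X hX
      rcases Finset.mem_insert.mp hX with rfl | hX
      · exact hidomPC
      · rw [Finset.mem_singleton.mp hX]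
        exact hidomPD
  have hid2 : idNum H = 2 := by
    apply le_antisymm
    · rw [idNum]
      apply csSup_le
      · exact ⟨2, {PC, PD}, hidom2, by
          rw [Finset.card_insert_of_notMem (by simpa using hPCPD), Finset.card_singleton]⟩
      · rintro k ⟨ρ, hρ, rfl⟩
        have := pullback_bound_B2 hIC femb u Y (⟨y0, hy0⟩)
          (fun v => by
            by_cases hvu : v = u
            · exact Or.inl hvu
            · by_cases hvS : v ∈ S
              · exact Or.inr (Or.inr (hSf v hvS))
              · exact Or.inr (Or.inl (hTmem v hvu hvS)))
          (fun i hi => hYS (f i) hi (hfS i))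
          hfu huY ua
          (fun t ht z hadj => hYonly t ht z hadj) hρ
        omega
    · have h2 : ({PC, PD} : Finset (Finset (Fin h))).card = 2 := by
        rw [Finset.card_insert_of_notMem (by simpa using hPCPD), Finset.card_singleton]
      calc 2 = ({PC, PD} : Finset (Finset (Fin h))).card := h2.symm
        _ ≤ idNum H := card_le_idNum hidom2
  -- assemble B and the isomorphism
  set B : SimpleGraph (Fin h ⊕ Fin mY) := H ⊕g (⊥ : SimpleGraph (Fin mY)) with hB
  have hInB2 : InB2 B := ⟨Fin h, H, mY, hm1, hHcol, hHmin, hid2, ⟨SimpleGraph.Iso.refl (G := H ⊕g (⊥ : SimpleGraph (Fin mY)))⟩⟩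
  set eu : {x : V // x = u} ≃ Fin 1 :=
    Fintype.equivFinOfCardEq (Fintype.card_subtype_eq u) with heu
  set e2 : {x : V // ¬ x = u} ≃ (Fin h ⊕ Fin mY) :=
    (Equiv.sumCompl (fun z : {x : V // ¬ x = u} => z.1 ∈ S)).symm.trans
      (Equiv.sumCongr eS eT) with he2
  set e : V ≃ (Fin 1 ⊕ (Fin h ⊕ Fin mY)) :=
    (Equiv.sumCompl (fun x : V => x = u)).symm.trans (Equiv.sumCongr eu e2) with he
  have exu : ∀ (x : V) (hx : x = u), e x = Sum.inl (eu ⟨x, hx⟩) := by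
    intro x hx
    rw [he, Equiv.trans_apply, Equiv.sumCompl_symm_apply_of_pos (p := (fun x : V => x = u)) (a := x) hx]
    rfl
  have exS : ∀ (x : V) (hxu : ¬ x = u) (hxS : x ∈ S),
      e x = Sum.inr (Sum.inl (eS ⟨⟨x, hxu⟩, hxS⟩)) := by
    intro x hxu hxS
    rw [he, Equiv.trans_apply, Equiv.sumCompl_symm_apply_of_neg (p := (fun x : V => x = u)) (a := x) hxu]
    show Sum.inr (e2 ⟨x, hxu⟩) = _
    rw [he2, Equiv.trans_apply, Equiv.sumCompl_symm_apply_of_pos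
      (p := (fun z : {x : V // ¬ x = u} => z.1 ∈ S)) (a := ⟨x, hxu⟩) hxS]
    rfl
  have exT : ∀ (x : V) (hxu : ¬ x = u) (hxS : ¬ x ∈ S),
      e x = Sum.inr (Sum.inr (eT ⟨⟨x, hxu⟩, hxS⟩)) := by
    intro x hxu hxS
    rw [he, Equiv.trans_apply, Equiv.sumCompl_symm_apply_of_neg (p := (fun x : V => x = u)) (a := x) hxu]
    show Sum.inr (e2 ⟨x, hxu⟩) = _
    rw [he2, Equiv.trans_apply, Equiv.sumCompl_symm_apply_of_neg
      (p := (fun z : {x : V // ¬ x = u} => z.1 ∈ S)) (a := ⟨x, hxu⟩) hxS]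
    rfl
  have hfeS : ∀ (x : V) (hxu : ¬ x = u) (hxS : x ∈ S), f (eS ⟨⟨x, hxu⟩, hxS⟩) = x := by
    intro x hxu hxS
    show (((eS.symm (eS ⟨⟨x, hxu⟩, hxS⟩)) : {z : V // ¬ z = u}) : V) = x
    rw [Equiv.symm_apply_apply]
  refine ⟨Fin h ⊕ Fin mY, B, hInB2, ⟨⟨e, @fun x y => ?_⟩⟩⟩
  by_cases hxu : x = u <;> by_cases hyu : y = u
  · rw [exu x hxu, exu y hyu, graphJoin_adj_inl_inl]
    refine iff_of_false (fun hadj => ?_) (fun hadj => ?_)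
    · exact hadj.ne (Subsingleton.elim _ _)
    · exact G.loopless.irrefl u (by rwa [hxu, hyu] at hadj)
  · rw [exu x hxu]
    have hadjxy : G.Adj x y := by rw [hxu]; exact ua y hyu
    rcases em (y ∈ S) with hyS | hyS
    · rw [exS y hyu hyS]
      exact iff_of_true (graphJoin_adj_inl_inr _ _) hadjxy
    · rw [exT y hyu hyS]
      exact iff_of_true (graphJoin_adj_inl_inr _ _) hadjxy
  · rw [exu y hyu]
    have hadjxy : G.Adj x y := by rw [hyu]; exact (ua x hxu).symm
    rcases em (x ∈ S) with hxS | hxS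
    · rw [exS x hxu hxS]
      exact iff_of_true (graphJoin_adj_inr_inl _ _) hadjxy
    · rw [exT x hxu hxS]
      exact iff_of_true (graphJoin_adj_inr_inl _ _) hadjxy
  · rcases em (x ∈ S) with hxS | hxS <;> rcases em (y ∈ S) with hyS | hyS
    · rw [exS x hxu hxS, exS y hyu hyS, graphJoin_adj_inr_inr]
      rw [hB]
      rw [show (H ⊕g (⊥ : SimpleGraph (Fin mY))).Adj
          (Sum.inl (eS ⟨⟨x, hxu⟩, hxS⟩)) (Sum.inl (eS ⟨⟨y, hyu⟩, hyS⟩)) ↔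
          H.Adj (eS ⟨⟨x, hxu⟩, hxS⟩) (eS ⟨⟨y, hyu⟩, hyS⟩) from Iff.rfl]
      rw [hHadj, hfeS x hxu hxS, hfeS y hyu hyS]
    · rw [exS x hxu hxS, exT y hyu hyS, graphJoin_adj_inr_inr]
      refine iff_of_false (fun hadj => by rw [hB] at hadj; simp [SimpleGraph.sum_adj] at hadj) ?_
      intro hadj
      have hyY : y ∈ Y := hTmem y hyu hyS
      exact hxu (hYonly y hyY x (G.adj_symm hadj))
    · rw [exT x hxu hxS, exS y hyu hyS, graphJoin_adj_inr_inr]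
      refine iff_of_false (fun hadj => by rw [hB] at hadj; simp [SimpleGraph.sum_adj] at hadj) ?_
      intro hadj
      have hxY : x ∈ Y := hTmem x hxu hxS
      exact hyu (hYonly x hxY y hadj)
    · rw [exT x hxu hxS, exT y hyu hyS, graphJoin_adj_inr_inr]
      refine iff_of_false (fun hadj => by rw [hB] at hadj; simp [SimpleGraph.sum_adj] at hadj) ?_
      intro hadj
      have hxY : x ∈ Y := hTmem x hxu hxS
      exact hyu (hYonly x hxY y hadj)

end PayloadK1
section PayloadK1Outer
set_option linter.unusedSectionVars false
set_option maxHeartbeats 1000000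
variable {V : Type*} [Fintype V] {G : SimpleGraph V} {π : Finset (Finset V)}
  {A B C D : Finset V}

lemma dominating_mono {S T : Set V} (hST : S ⊆ T) (h : Dominating G S) :
    Dominating G T := by
  intro v
  rcases h v with hv | ⟨u, hu, hadj⟩
  · exact Or.inl (hST hv)
  · exact Or.inr ⟨u, hST hu, hadj⟩

lemma payload_K1 (hIC : IC G = 4) (ctx : Ctx G π A B C D) (hPA : DomSingleton G A)
    (hnB : ¬ DomSingleton G B) (hnC : ¬ DomSingleton G C) (hnD : ¬ DomSingleton G D) :
    ∃ (W : Type) (Bg : SimpleGraph W), InB2 Bg ∧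
      Nonempty (G ≃g graphJoin (⊤ : SimpleGraph (Fin 1)) Bg) := by
  obtain ⟨hBni, Yb, hYb, hYbB, coalB⟩ := ctx.partner ctx.hB hnB
  obtain ⟨hDni, Yd, hYd, hYdD, coalD⟩ := ctx.partner ctx.hD hnD
  have ctxACBD : Ctx G π A C B D :=
    ⟨ctx.hπ, ctx.hA, ctx.hC, ctx.hB, ctx.hD,
      fun E hE => by rcases ctx.hall E hE with h | h | h | h <;> tauto,
      ctx.hAC, ctx.hAB, ctx.hAD, ctx.hBC.symm, ctx.hCD, ctx.hBD⟩
  have ctxADBC : Ctx G π A D B C :=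
    ⟨ctx.hπ, ctx.hA, ctx.hD, ctx.hB, ctx.hC,
      fun E hE => by rcases ctx.hall E hE with h | h | h | h <;> tauto,
      ctx.hAD, ctx.hAB, ctx.hAC, ctx.hBD.symm, ctx.hCD.symm, ctx.hBC⟩
  rcases ctx.hall Yb hYb with heq | heq | heq | heq
  · rw [heq] at coalB
    exact absurd hPA.indepDom coalB.2.2.2.2.1
  · exact absurd heq hYbB
  · rw [heq] at coalB
    rcases ctx.hall Yd hYd with heqd | heqd | heqd | heqd
    · rw [heqd] at coalD
      exact absurd hPA.indepDom coalD.2.2.2.2.1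
    · rw [heqd] at coalD
      exact payload_K1' hIC ctx hPA coalB (icCoalition_symm coalD)
    · rw [heqd] at coalD
      exact payload_K1' hIC ctxACBD hPA (icCoalition_symm coalB) (icCoalition_symm coalD)
    · exact absurd heqd hYdD
  · rw [heq] at coalB
    rcases ctx.hall Yd hYd with heqd | heqd | heqd | heqd
    · rw [heqd] at coalD
      exact absurd hPA.indepDom coalD.2.2.2.2.1
    · obtain ⟨hCni, Yc, hYc, hYcC, coalC⟩ := ctx.partner ctx.hC hnC
      rcases ctx.hall Yc hYc with heqc | heqc | heqc | heqc
      · rw [heqc] at coalC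
        exact absurd hPA.indepDom coalC.2.2.2.2.1
      · rw [heqc] at coalC
        exact payload_K1' hIC ctx hPA (icCoalition_symm coalC) coalB
      · exact absurd heqc hYcC
      · rw [heqc] at coalC
        exact payload_K1' hIC ctxADBC hPA (icCoalition_symm coalB) (icCoalition_symm coalC)
    · rw [heqd] at coalD
      exact payload_K1' hIC ctxADBC hPA (icCoalition_symm coalB) coalD
    · exact absurd heqd hYdD

end PayloadK1Outer
section PayloadB1
set_option linter.unusedSectionVars false
set_option maxHeartbeats 1000000
variable {V : Type*} [Fintype V] {G : SimpleGraph V} {π : Finset (Finset V)}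
  {A B C D : Finset V}

lemma payload_B1' (hIC : IC G = 4) (ctx : Ctx G π A B C D)
    (hnd : ∀ v : V, ¬ Dominating G {v})
    (coalAB : ICCoalition G (A : Set V) (B : Set V))
    (coalCD : ICCoalition G (C : Set V) (D : Set V)) : InB1 G := by
  classical
  have hsep : ∀ {X Y : Finset V}, X ∈ π → Y ∈ π → X ≠ Y → ∀ {v : V}, v ∈ X → v ∉ Y :=
    fun {X Y} hX hY hne {v} hv => class_nonmem ctx.hπ.1 hX hY hne hv
  obtain ⟨a0, ha0⟩ := ctx.hπ.1.1 A ctx.hA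
  obtain ⟨b0, hb0⟩ := ctx.hπ.1.1 B ctx.hB
  obtain ⟨c0, hc0⟩ := ctx.hπ.1.1 C ctx.hC
  obtain ⟨d0, hd0⟩ := ctx.hπ.1.1 D ctx.hD
  have hABidom : IndepDom G ((A : Set V) ∪ (B : Set V)) := coalAB.2.2.2.2.2
  have hCDidom : IndepDom G ((C : Set V) ∪ (D : Set V)) := coalCD.2.2.2.2.2
  have hcoeAB : ((A ∪ B : Finset V) : Set V) = (A : Set V) ∪ (B : Set V) :=
    Finset.coe_union A B
  have hcoeCD : ((C ∪ D : Finset V) : Set V) = (C : Set V) ∪ (D : Set V) :=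
    Finset.coe_union C D
  have hunion : ((A : Set V) ∪ B) ∪ ((C : Set V) ∪ D) = Set.univ := by
    ext v
    simp only [Set.mem_union, Set.mem_univ, iff_true, Finset.mem_coe]
    rcases ctx.cover v with h | h | h | h <;> tauto
  have hdisj2 : Disjoint ((A : Set V) ∪ B) ((C : Set V) ∪ D) := by
    rw [Set.disjoint_left]
    rintro x (hx | hx) (hy | hy)
    · exact hsep ctx.hA ctx.hC ctx.hAC (Finset.mem_coe.mp hx) (Finset.mem_coe.mp hy)
    · exact hsep ctx.hA ctx.hD ctx.hAD (Finset.mem_coe.mp hx) (Finset.mem_coe.mp hy)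
    · exact hsep ctx.hB ctx.hC ctx.hBC (Finset.mem_coe.mp hx) (Finset.mem_coe.mp hy)
    · exact hsep ctx.hB ctx.hD ctx.hBD (Finset.mem_coe.mp hx) (Finset.mem_coe.mp hy)
  have hmindeg : ∀ v : V, ∃ w : V, G.Adj v w := by
    intro v
    rcases ctx.cover v with h | h | h | h
    · rcases hCDidom.2 v with (hv | hv) | ⟨u, hu, hadj⟩
      · exact absurd (Finset.mem_coe.mp hv) (hsep ctx.hA ctx.hC ctx.hAC h)
      · exact absurd (Finset.mem_coe.mp hv) (hsep ctx.hA ctx.hD ctx.hAD h)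
      · exact ⟨u, G.adj_symm hadj⟩
    · rcases hCDidom.2 v with (hv | hv) | ⟨u, hu, hadj⟩
      · exact absurd (Finset.mem_coe.mp hv) (hsep ctx.hB ctx.hC ctx.hBC h)
      · exact absurd (Finset.mem_coe.mp hv) (hsep ctx.hB ctx.hD ctx.hBD h)
      · exact ⟨u, G.adj_symm hadj⟩
    · rcases hABidom.2 v with (hv | hv) | ⟨u, hu, hadj⟩
      · exact absurd (Finset.mem_coe.mp hv) (hsep ctx.hC ctx.hA ctx.hAC.symm h)
      · exact absurd (Finset.mem_coe.mp hv) (hsep ctx.hC ctx.hB ctx.hBC.symm h)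
      · exact ⟨u, G.adj_symm hadj⟩
    · rcases hABidom.2 v with (hv | hv) | ⟨u, hu, hadj⟩
      · exact absurd (Finset.mem_coe.mp hv) (hsep ctx.hD ctx.hA ctx.hAD.symm h)
      · exact absurd (Finset.mem_coe.mp hv) (hsep ctx.hD ctx.hB ctx.hBD.symm h)
      · exact ⟨u, G.adj_symm hadj⟩
  have hABCDne : (A ∪ B : Finset V) ≠ (C ∪ D) := by
    intro heq
    have : a0 ∈ C ∪ D := heq ▸ (Finset.mem_union_left _ ha0)
    rcases Finset.mem_union.mp this with h | h
    exacts [hsep ctx.hA ctx.hC ctx.hAC ha0 h, hsep ctx.hA ctx.hD ctx.hAD ha0 h]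
  have hmemAB : ∀ v : V, v ∈ A ∪ B ↔ v ∈ A ∨ v ∈ B := fun v => Finset.mem_union
  have hmemCD : ∀ v : V, v ∈ C ∪ D ↔ v ∈ C ∨ v ∈ D := fun v => Finset.mem_union
  have hidom : IsIdomaticPartition G ({A ∪ B, C ∪ D} : Finset (Finset V)) := by
    refine ⟨⟨?_, ?_⟩, ?_⟩
    · intro X hX
      rcases Finset.mem_insert.mp hX with rfl | hX
      · exact ⟨a0, Finset.mem_union_left _ ha0⟩
      · rw [Finset.mem_singleton.mp hX]
        exact ⟨c0, Finset.mem_union_left _ hc0⟩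
    · intro v
      rcases ctx.cover v with h | h | h | h
      · refine ⟨A ∪ B, ⟨Finset.mem_insert_self _ _, Finset.mem_union_left _ h⟩, ?_⟩
        rintro X ⟨hX, hvX⟩
        rcases Finset.mem_insert.mp hX with rfl | hX
        · rfl
        · rw [Finset.mem_singleton.mp hX] at hvX ⊢
          rcases (hmemCD v).mp hvX with hh | hh
          · exact absurd hh (hsep ctx.hA ctx.hC ctx.hAC h)
          · exact absurd hh (hsep ctx.hA ctx.hD ctx.hAD h)
      · refine ⟨A ∪ B, ⟨Finset.mem_insert_self _ _, Finset.mem_union_right _ h⟩, ?_⟩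
        rintro X ⟨hX, hvX⟩
        rcases Finset.mem_insert.mp hX with rfl | hX
        · rfl
        · rw [Finset.mem_singleton.mp hX] at hvX ⊢
          rcases (hmemCD v).mp hvX with hh | hh
          · exact absurd hh (hsep ctx.hB ctx.hC ctx.hBC h)
          · exact absurd hh (hsep ctx.hB ctx.hD ctx.hBD h)
      · refine ⟨C ∪ D, ⟨Finset.mem_insert_of_mem (Finset.mem_singleton_self _),
          Finset.mem_union_left _ h⟩, ?_⟩
        rintro X ⟨hX, hvX⟩
        rcases Finset.mem_insert.mp hX with rfl | hX
        · rcases (hmemAB v).mp hvX with hh | hh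
          · exact absurd hh (hsep ctx.hC ctx.hA ctx.hAC.symm h)
          · exact absurd hh (hsep ctx.hC ctx.hB ctx.hBC.symm h)
        · rw [Finset.mem_singleton.mp hX]
      · refine ⟨C ∪ D, ⟨Finset.mem_insert_of_mem (Finset.mem_singleton_self _),
          Finset.mem_union_right _ h⟩, ?_⟩
        rintro X ⟨hX, hvX⟩
        rcases Finset.mem_insert.mp hX with rfl | hX
        · rcases (hmemAB v).mp hvX with hh | hh
          · exact absurd hh (hsep ctx.hD ctx.hA ctx.hAD.symm h)
          · exact absurd hh (hsep ctx.hD ctx.hB ctx.hBD.symm h)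
        · rw [Finset.mem_singleton.mp hX]
    · intro X hX
      rcases Finset.mem_insert.mp hX with rfl | hX
      · rw [hcoeAB]
        exact hABidom
      · rw [Finset.mem_singleton.mp hX, hcoeCD]
        exact hCDidom
  have hcard2 : ({A ∪ B, C ∪ D} : Finset (Finset V)).card = 2 := by
    rw [Finset.card_insert_of_notMem (by simpa using hABCDne), Finset.card_singleton]
  have hid2 : idNum G = 2 := by
    apply le_antisymm
    · rw [idNum]
      apply csSup_le
      · exact ⟨2, {A ∪ B, C ∪ D}, hidom, hcard2⟩
      · rintro k ⟨ρ, hρ, rfl⟩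
        have := split_lemma hnd hρ
        rw [hIC] at this
        omega
    · calc 2 = ({A ∪ B, C ∪ D} : Finset (Finset V)).card := hcard2.symm
        _ ≤ idNum G := card_le_idNum hidom
  refine ⟨(A : Set V) ∪ B, (C : Set V) ∪ D, hunion, hdisj2,
    coalAB.2.2.2.2.2.1, coalCD.2.2.2.2.2.1, ?_, ?_, hmindeg, hid2⟩
  · rw [← hcoeAB, Set.ncard_coe_finset]
    have : a0 ≠ b0 := fun hh => hsep ctx.hA ctx.hB ctx.hAB ha0 (hh ▸ hb0)
    have := Finset.one_lt_card.mpr ⟨a0, Finset.mem_union_left _ ha0, b0,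
      Finset.mem_union_right _ hb0, this⟩
    omega
  · rw [← hcoeCD, Set.ncard_coe_finset]
    have : c0 ≠ d0 := fun hh => hsep ctx.hC ctx.hD ctx.hCD hc0 (hh ▸ hd0)
    have := Finset.one_lt_card.mpr ⟨c0, Finset.mem_union_left _ hc0, d0,
      Finset.mem_union_right _ hd0, this⟩
    omega

end PayloadB1
section PayloadB3
set_option linter.unusedSectionVars false
set_option maxHeartbeats 4000000
set_option synthInstance.maxHeartbeats 400000
variable {V : Type*} [Fintype V] {G : SimpleGraph V} {π : Finset (Finset V)}
  {A B C D : Finset V}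

lemma payload_B3' (hIC : IC G = 4) (ctx : Ctx G π A B C D)
    (coalAB : ICCoalition G (A : Set V) (B : Set V))
    (coalAC : ICCoalition G (A : Set V) (C : Set V))
    (coalAD : ICCoalition G (A : Set V) (D : Set V)) : InB3 G := by
  classical
  have hsep : ∀ {X Y : Finset V}, X ∈ π → Y ∈ π → X ≠ Y → ∀ {v : V}, v ∈ X → v ∉ Y :=
    fun {X Y} hX hY hne {v} hv => class_nonmem ctx.hπ.1 hX hY hne hv
  obtain ⟨a0, ha0⟩ := ctx.hπ.1.1 A ctx.hA
  have hABind : IndepSet G ((A : Set V) ∪ B) := coalAB.2.2.2.2.2.1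
  have hACind : IndepSet G ((A : Set V) ∪ C) := coalAC.2.2.2.2.2.1
  have hADind : IndepSet G ((A : Set V) ∪ D) := coalAD.2.2.2.2.2.1
  have hABdom : Dominating G ((A : Set V) ∪ B) := coalAB.2.2.2.2.2.2
  have hACdom : Dominating G ((A : Set V) ∪ C) := coalAC.2.2.2.2.2.2
  have hADdom : Dominating G ((A : Set V) ∪ D) := coalAD.2.2.2.2.2.2
  have hAind : IndepSet G (A : Set V) := coalAB.2.1
  have hBind : IndepSet G (B : Set V) := coalAB.2.2.1
  have hCind : IndepSet G (C : Set V) := coalAC.2.2.1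
  have hDind : IndepSet G (D : Set V) := coalAD.2.2.1
  have hAiso : ∀ a ∈ A, ∀ z : V, ¬ G.Adj a z := by
    intro a ha z hadj
    rcases ctx.cover z with h | h | h | h
    · exact hAind (Finset.mem_coe.mpr ha) (Finset.mem_coe.mpr h) hadj
    · exact hABind (Or.inl (Finset.mem_coe.mpr ha)) (Or.inr (Finset.mem_coe.mpr h)) hadj
    · exact hACind (Or.inl (Finset.mem_coe.mpr ha)) (Or.inr (Finset.mem_coe.mpr h)) hadj
    · exact hADind (Or.inl (Finset.mem_coe.mpr ha)) (Or.inr (Finset.mem_coe.mpr h)) hadj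
  have htoB : ∀ v : V, v ∈ C ∨ v ∈ D → ∃ b ∈ B, G.Adj v b := by
    intro v hv
    rcases hABdom v with (h | h) | ⟨x, hx | hx, hadj⟩
    · rcases hv with hv | hv
      · exact absurd hv (fun hh => hsep ctx.hA ctx.hC ctx.hAC (Finset.mem_coe.mp h) hh)
      · exact absurd hv (fun hh => hsep ctx.hA ctx.hD ctx.hAD (Finset.mem_coe.mp h) hh)
    · rcases hv with hv | hv
      · exact absurd hv (fun hh => hsep ctx.hB ctx.hC ctx.hBC (Finset.mem_coe.mp h) hh)
      · exact absurd hv (fun hh => hsep ctx.hB ctx.hD ctx.hBD (Finset.mem_coe.mp h) hh)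
    · exact absurd hadj (hAiso x (Finset.mem_coe.mp hx) v)
    · exact ⟨x, Finset.mem_coe.mp hx, G.adj_symm hadj⟩
  have htoC : ∀ v : V, v ∈ B ∨ v ∈ D → ∃ c ∈ C, G.Adj v c := by
    intro v hv
    rcases hACdom v with (h | h) | ⟨x, hx | hx, hadj⟩
    · rcases hv with hv | hv
      · exact absurd hv (fun hh => hsep ctx.hA ctx.hB ctx.hAB (Finset.mem_coe.mp h) hh)
      · exact absurd hv (fun hh => hsep ctx.hA ctx.hD ctx.hAD (Finset.mem_coe.mp h) hh)
    · rcases hv with hv | hv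
      · exact absurd hv (fun hh => hsep ctx.hC ctx.hB ctx.hBC.symm (Finset.mem_coe.mp h) hh)
      · exact absurd hv (fun hh => hsep ctx.hC ctx.hD ctx.hCD (Finset.mem_coe.mp h) hh)
    · exact absurd hadj (hAiso x (Finset.mem_coe.mp hx) v)
    · exact ⟨x, Finset.mem_coe.mp hx, G.adj_symm hadj⟩
  have htoD : ∀ v : V, v ∈ B ∨ v ∈ C → ∃ d ∈ D, G.Adj v d := by
    intro v hv
    rcases hADdom v with (h | h) | ⟨x, hx | hx, hadj⟩
    · rcases hv with hv | hv
      · exact absurd hv (fun hh => hsep ctx.hA ctx.hB ctx.hAB (Finset.mem_coe.mp h) hh)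
      · exact absurd hv (fun hh => hsep ctx.hA ctx.hC ctx.hAC (Finset.mem_coe.mp h) hh)
    · rcases hv with hv | hv
      · exact absurd hv (fun hh => hsep ctx.hD ctx.hB ctx.hBD.symm (Finset.mem_coe.mp h) hh)
      · exact absurd hv (fun hh => hsep ctx.hD ctx.hC ctx.hCD.symm (Finset.mem_coe.mp h) hh)
    · exact absurd hadj (hAiso x (Finset.mem_coe.mp hx) v)
    · exact ⟨x, Finset.mem_coe.mp hx, G.adj_symm hadj⟩
  set S : Finset V := B ∪ C ∪ D with hSdef
  have hSiff : ∀ x : V, x ∈ S ↔ x ∈ B ∨ x ∈ C ∨ x ∈ D := by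
    intro x; simp [hSdef, Finset.mem_union, or_assoc]
  have haS : ∀ a ∈ A, a ∉ S := by
    intro a ha
    rw [hSiff]
    push_neg
    exact ⟨hsep ctx.hA ctx.hB ctx.hAB ha, hsep ctx.hA ctx.hC ctx.hAC ha,
      hsep ctx.hA ctx.hD ctx.hAD ha⟩
  have hTmem : ∀ x : V, ¬ x ∈ S → x ∈ A := by
    intro x hx
    rcases ctx.cover x with h | h | h | h
    · exact h
    · exact absurd ((hSiff x).mpr (Or.inl h)) hx
    · exact absurd ((hSiff x).mpr (Or.inr (Or.inl h))) hx
    · exact absurd ((hSiff x).mpr (Or.inr (Or.inr h))) hx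
  set h : ℕ := Fintype.card {z : V // z ∈ S} with hh
  set eS : {z : V // z ∈ S} ≃ Fin h := Fintype.equivFin _ with heS
  set f : Fin h → V := fun i => (eS.symm i).1 with hf
  have hfinj : Function.Injective f := by
    intro i j hij
    exact eS.symm.injective (Subtype.ext hij)
  set femb : Fin h ↪ V := ⟨f, hfinj⟩ with hfemb
  have hfS : ∀ i, f i ∈ S := fun i => (eS.symm i).2
  have hSf : ∀ v : V, v ∈ S → ∃ i, f i = v := by
    intro v hv
    refine ⟨eS ⟨v, hv⟩, ?_⟩
    show ((eS.symm (eS ⟨v, hv⟩)) : V) = v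
    rw [Equiv.symm_apply_apply]
  set m : ℕ := Fintype.card {z : V // ¬ z ∈ S} with hm
  set eT : {z : V // ¬ z ∈ S} ≃ Fin m := Fintype.equivFin _ with heT
  have hm1 : 1 ≤ m := by
    rw [hm]
    exact Fintype.card_pos_iff.mpr ⟨⟨a0, haS a0 ha0⟩⟩
  set H : SimpleGraph (Fin h) := SimpleGraph.comap (⇑femb) G with hH
  have hHadj : ∀ i j, H.Adj i j ↔ G.Adj (f i) (f j) := by
    intro i j; rw [hH]; rfl
  have hHmin : ∀ i : Fin h, ∃ j : Fin h, H.Adj i j := by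
    intro i
    rcases (hSiff (f i)).mp (hfS i) with hfi | hfi | hfi
    · obtain ⟨c, hc, hadj⟩ := htoC (f i) (Or.inl hfi)
      obtain ⟨j, hj⟩ := hSf c ((hSiff c).mpr (Or.inr (Or.inl hc)))
      exact ⟨j, (hHadj i j).mpr (hj ▸ hadj)⟩
    · obtain ⟨b, hb, hadj⟩ := htoB (f i) (Or.inl hfi)
      obtain ⟨j, hj⟩ := hSf b ((hSiff b).mpr (Or.inl hb))
      exact ⟨j, (hHadj i j).mpr (hj ▸ hadj)⟩
    · obtain ⟨b, hb, hadj⟩ := htoB (f i) (Or.inr hfi)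
      obtain ⟨j, hj⟩ := hSf b ((hSiff b).mpr (Or.inl hb))
      exact ⟨j, (hHadj i j).mpr (hj ▸ hadj)⟩
  have hHcol : H.Colorable 3 := by
    refine ⟨SimpleGraph.Coloring.mk
      (fun i => if f i ∈ B then (0 : Fin 3) else if f i ∈ C then 1 else 2) ?_⟩
    intro i j hadj
    rw [hHadj] at hadj
    by_cases hiB : f i ∈ B <;> by_cases hjB : f j ∈ B
    · exact absurd hadj (hBind (Finset.mem_coe.mpr hiB) (Finset.mem_coe.mpr hjB))
    · by_cases hjC : f j ∈ C <;> simp [hiB, hjB, hjC]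
    · by_cases hiC : f i ∈ C <;> simp [hiB, hjB, hiC]
    · by_cases hiC : f i ∈ C <;> by_cases hjC : f j ∈ C
      · exact absurd hadj (hCind (Finset.mem_coe.mpr hiC) (Finset.mem_coe.mpr hjC))
      · simp [hiB, hjB, hiC, hjC]
      · simp [hiB, hjB, hiC, hjC]
      · have hiD : f i ∈ D := by
          rcases (hSiff (f i)).mp (hfS i) with hfi | hfi | hfi
          exacts [absurd hfi hiB, absurd hfi hiC, hfi]
        have hjD : f j ∈ D := by
          rcases (hSiff (f j)).mp (hfS j) with hfj | hfj | hfj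
          exacts [absurd hfj hjB, absurd hfj hjC, hfj]
        exact absurd hadj (hDind (Finset.mem_coe.mpr hiD) (Finset.mem_coe.mpr hjD))
  -- idomatic partition of H into three classes
  set PB : Finset (Fin h) := Finset.univ.filter (fun i => f i ∈ B) with hPB
  set PC : Finset (Fin h) := Finset.univ.filter (fun i => f i ∈ C) with hPC
  set PD : Finset (Fin h) := Finset.univ.filter (fun i => f i ∈ D) with hPD
  have hPBmem : ∀ i, i ∈ PB ↔ f i ∈ B := by intro i; simp [hPB]
  have hPCmem : ∀ i, i ∈ PC ↔ f i ∈ C := by intro i; simp [hPC]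
  have hPDmem : ∀ i, i ∈ PD ↔ f i ∈ D := by intro i; simp [hPD]
  obtain ⟨b0, hb0⟩ := ctx.hπ.1.1 B ctx.hB
  obtain ⟨c0, hc0⟩ := ctx.hπ.1.1 C ctx.hC
  obtain ⟨d0, hd0⟩ := ctx.hπ.1.1 D ctx.hD
  obtain ⟨ib0, hib0⟩ := hSf b0 ((hSiff b0).mpr (Or.inl hb0))
  obtain ⟨ic0, hic0⟩ := hSf c0 ((hSiff c0).mpr (Or.inr (Or.inl hc0)))
  obtain ⟨id0, hid0⟩ := hSf d0 ((hSiff d0).mpr (Or.inr (Or.inr hd0)))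
  have hPBne : PB.Nonempty := ⟨ib0, (hPBmem ib0).mpr (hib0 ▸ hb0)⟩
  have hPCne : PC.Nonempty := ⟨ic0, (hPCmem ic0).mpr (hic0 ▸ hc0)⟩
  have hPDne : PD.Nonempty := ⟨id0, (hPDmem id0).mpr (hid0 ▸ hd0)⟩
  have hPBPC : PB ≠ PC := by
    intro heq
    obtain ⟨i, hi⟩ := hPBne
    exact hsep ctx.hB ctx.hC ctx.hBC ((hPBmem i).mp hi) ((hPCmem i).mp (heq ▸ hi))
  have hPBPD : PB ≠ PD := by
    intro heq
    obtain ⟨i, hi⟩ := hPBne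
    exact hsep ctx.hB ctx.hD ctx.hBD ((hPBmem i).mp hi) ((hPDmem i).mp (heq ▸ hi))
  have hPCPD : PC ≠ PD := by
    intro heq
    obtain ⟨i, hi⟩ := hPCne
    exact hsep ctx.hC ctx.hD ctx.hCD ((hPCmem i).mp hi) ((hPDmem i).mp (heq ▸ hi))
  have hidomPB : IndepDom H (PB : Set (Fin h)) := by
    rw [hH]
    refine pull_indepdom femb hBind ?_ hPBmem
    intro w
    rcases (hSiff (f w)).mp (hfS w) with hw | hw | hw
    · exact Or.inl hw
    · obtain ⟨b, hb, hadj⟩ := htoB (f w) (Or.inl hw)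
      obtain ⟨j, hj⟩ := hSf b ((hSiff b).mpr (Or.inl hb))
      refine Or.inr ⟨j, ?_, ?_⟩
      · show f j ∈ B
        rw [hj]; exact hb
      · show G.Adj (f j) (f w)
        rw [hj]; exact G.adj_symm hadj
    · obtain ⟨b, hb, hadj⟩ := htoB (f w) (Or.inr hw)
      obtain ⟨j, hj⟩ := hSf b ((hSiff b).mpr (Or.inl hb))
      refine Or.inr ⟨j, ?_, ?_⟩
      · show f j ∈ B
        rw [hj]; exact hb
      · show G.Adj (f j) (f w)
        rw [hj]; exact G.adj_symm hadj
  have hidomPC : IndepDom H (PC : Set (Fin h)) := by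
    rw [hH]
    refine pull_indepdom femb hCind ?_ hPCmem
    intro w
    rcases (hSiff (f w)).mp (hfS w) with hw | hw | hw
    · obtain ⟨c, hc, hadj⟩ := htoC (f w) (Or.inl hw)
      obtain ⟨j, hj⟩ := hSf c ((hSiff c).mpr (Or.inr (Or.inl hc)))
      refine Or.inr ⟨j, ?_, ?_⟩
      · show f j ∈ C
        rw [hj]; exact hc
      · show G.Adj (f j) (f w)
        rw [hj]; exact G.adj_symm hadj
    · exact Or.inl hw
    · obtain ⟨c, hc, hadj⟩ := htoC (f w) (Or.inr hw)
      obtain ⟨j, hj⟩ := hSf c ((hSiff c).mpr (Or.inr (Or.inl hc)))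
      refine Or.inr ⟨j, ?_, ?_⟩
      · show f j ∈ C
        rw [hj]; exact hc
      · show G.Adj (f j) (f w)
        rw [hj]; exact G.adj_symm hadj
  have hidomPD : IndepDom H (PD : Set (Fin h)) := by
    rw [hH]
    refine pull_indepdom femb hDind ?_ hPDmem
    intro w
    rcases (hSiff (f w)).mp (hfS w) with hw | hw | hw
    · obtain ⟨d, hd, hadj⟩ := htoD (f w) (Or.inl hw)
      obtain ⟨j, hj⟩ := hSf d ((hSiff d).mpr (Or.inr (Or.inr hd)))
      refine Or.inr ⟨j, ?_, ?_⟩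
      · show f j ∈ D
        rw [hj]; exact hd
      · show G.Adj (f j) (f w)
        rw [hj]; exact G.adj_symm hadj
    · obtain ⟨d, hd, hadj⟩ := htoD (f w) (Or.inr hw)
      obtain ⟨j, hj⟩ := hSf d ((hSiff d).mpr (Or.inr (Or.inr hd)))
      refine Or.inr ⟨j, ?_, ?_⟩
      · show f j ∈ D
        rw [hj]; exact hd
      · show G.Adj (f j) (f w)
        rw [hj]; exact G.adj_symm hadj
    · exact Or.inl hw
  have hmemPBCD : ∀ X : Finset (Fin h), X ∈ ({PB, PC, PD} : Finset (Finset (Fin h)))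
      ↔ X = PB ∨ X = PC ∨ X = PD := by
    intro X
    simp [Finset.mem_insert, Finset.mem_singleton]
  have hidom3 : IsIdomaticPartition H ({PB, PC, PD} : Finset (Finset (Fin h))) := by
    refine ⟨⟨?_, ?_⟩, ?_⟩
    · intro X hX
      rcases (hmemPBCD X).mp hX with rfl | rfl | rfl
      exacts [hPBne, hPCne, hPDne]
    · intro i
      rcases (hSiff (f i)).mp (hfS i) with hi | hi | hi
      · refine ⟨PB, ⟨(hmemPBCD PB).mpr (Or.inl rfl), (hPBmem i).mpr hi⟩, ?_⟩
        rintro X ⟨hX, hiX⟩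
        rcases (hmemPBCD X).mp hX with rfl | rfl | rfl
        · rfl
        · exact absurd ((hPCmem i).mp hiX) (hsep ctx.hB ctx.hC ctx.hBC hi)
        · exact absurd ((hPDmem i).mp hiX) (hsep ctx.hB ctx.hD ctx.hBD hi)
      · refine ⟨PC, ⟨(hmemPBCD PC).mpr (Or.inr (Or.inl rfl)), (hPCmem i).mpr hi⟩, ?_⟩
        rintro X ⟨hX, hiX⟩
        rcases (hmemPBCD X).mp hX with rfl | rfl | rfl
        · exact absurd ((hPBmem i).mp hiX) (hsep ctx.hC ctx.hB ctx.hBC.symm hi)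
        · rfl
        · exact absurd ((hPDmem i).mp hiX) (hsep ctx.hC ctx.hD ctx.hCD hi)
      · refine ⟨PD, ⟨(hmemPBCD PD).mpr (Or.inr (Or.inr rfl)), (hPDmem i).mpr hi⟩, ?_⟩
        rintro X ⟨hX, hiX⟩
        rcases (hmemPBCD X).mp hX with rfl | rfl | rfl
        · exact absurd ((hPBmem i).mp hiX) (hsep ctx.hD ctx.hB ctx.hBD.symm hi)
        · exact absurd ((hPCmem i).mp hiX) (hsep ctx.hD ctx.hC ctx.hCD.symm hi)
        · rfl
    · intro X hX
      rcases (hmemPBCD X).mp hX with rfl | rfl | rfl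
      exacts [hidomPB, hidomPC, hidomPD]
  have hcard3 : ({PB, PC, PD} : Finset (Finset (Fin h))).card = 3 := by
    rw [Finset.card_insert_of_notMem (by simp [hPBPC, hPBPD]),
      Finset.card_insert_of_notMem (by simpa using hPCPD), Finset.card_singleton]
  have hid3 : idNum H = 3 := by
    apply le_antisymm
    · rw [idNum]
      apply csSup_le
      · exact ⟨3, {PB, PC, PD}, hidom3, hcard3⟩
      · rintro k ⟨ρ, hρ, rfl⟩
        have := pullback_bound_B3 hIC femb A ⟨a0, ha0⟩
          (fun v => by
            by_cases hv : v ∈ S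
            · exact Or.inr (hSf v hv)
            · exact Or.inl (hTmem v hv))
          (fun i hi => haS (f i) hi (hfS i))
          (fun t ht z => hAiso t ht z) hρ
        omega
    · calc 3 = ({PB, PC, PD} : Finset (Finset (Fin h))).card := hcard3.symm
        _ ≤ idNum H := card_le_idNum hidom3
  -- the isomorphism
  set e : V ≃ (Fin h ⊕ Fin m) :=
    (Equiv.sumCompl (fun x : V => x ∈ S)).symm.trans (Equiv.sumCongr eS eT) with he
  have exS : ∀ (x : V) (hx : x ∈ S), e x = Sum.inl (eS ⟨x, hx⟩) := by
    intro x hx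
    rw [he, Equiv.trans_apply, Equiv.sumCompl_symm_apply_of_pos (p := (fun x : V => x ∈ S)) (a := x) hx]
    rfl
  have exT : ∀ (x : V) (hx : ¬ x ∈ S), e x = Sum.inr (eT ⟨x, hx⟩) := by
    intro x hx
    rw [he, Equiv.trans_apply, Equiv.sumCompl_symm_apply_of_neg (p := (fun x : V => x ∈ S)) (a := x) hx]
    rfl
  have hfeS : ∀ (x : V) (hx : x ∈ S), f (eS ⟨x, hx⟩) = x := by
    intro x hx
    show ((eS.symm (eS ⟨x, hx⟩)) : V) = x
    rw [Equiv.symm_apply_apply]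
  refine ⟨Fin h, H, m, hm1, hHcol, hHmin, hid3, ⟨⟨e, @fun x y => ?_⟩⟩⟩
  by_cases hx : x ∈ S <;> by_cases hy : y ∈ S
  · rw [exS x hx, exS y hy]
    rw [show (H ⊕g (⊥ : SimpleGraph (Fin m))).Adj (Sum.inl (eS ⟨x, hx⟩))
        (Sum.inl (eS ⟨y, hy⟩)) ↔ H.Adj (eS ⟨x, hx⟩) (eS ⟨y, hy⟩) from Iff.rfl]
    rw [hHadj, hfeS x hx, hfeS y hy]
  · rw [exS x hx, exT y hy]
    refine iff_of_false (fun hadj => by simp [SimpleGraph.sum_adj] at hadj) ?_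
    intro hadj
    exact hAiso y (hTmem y hy) x (G.adj_symm hadj)
  · rw [exT x hx, exS y hy]
    refine iff_of_false (fun hadj => by simp [SimpleGraph.sum_adj] at hadj) ?_
    intro hadj
    exact hAiso x (hTmem x hx) y hadj
  · rw [exT x hx, exT y hy]
    refine iff_of_false (fun hadj => by simp [SimpleGraph.sum_adj] at hadj) ?_
    intro hadj
    exact hAiso x (hTmem x hx) y hadj

end PayloadB3
section PayloadB
set_option linter.unusedSectionVars false
set_option maxHeartbeats 1000000
variable {V : Type*} [Fintype V] {G : SimpleGraph V} {π : Finset (Finset V)}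
  {A B C D : Finset V}

lemma payload_B_inner (hIC : IC G = 4) (ctx : Ctx G π A B C D)
    (hnd : ∀ v : V, ¬ Dominating G {v})
    (hnC : ¬ DomSingleton G C) (hnD : ¬ DomSingleton G D)
    (coalAB : ICCoalition G (A : Set V) (B : Set V)) : InB1 G ∨ InB3 G := by
  have ctxACBD : Ctx G π A C B D :=
    ⟨ctx.hπ, ctx.hA, ctx.hC, ctx.hB, ctx.hD,
      fun E hE => by rcases ctx.hall E hE with h | h | h | h <;> tauto,
      ctx.hAC, ctx.hAB, ctx.hAD, ctx.hBC.symm, ctx.hCD, ctx.hBD⟩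
  have ctxADBC : Ctx G π A D B C :=
    ⟨ctx.hπ, ctx.hA, ctx.hD, ctx.hB, ctx.hC,
      fun E hE => by rcases ctx.hall E hE with h | h | h | h <;> tauto,
      ctx.hAD, ctx.hAB, ctx.hAC, ctx.hBD.symm, ctx.hCD.symm, ctx.hBC⟩
  have ctxBACD : Ctx G π B A C D :=
    ⟨ctx.hπ, ctx.hB, ctx.hA, ctx.hC, ctx.hD,
      fun E hE => by rcases ctx.hall E hE with h | h | h | h <;> tauto,
      ctx.hAB.symm, ctx.hBC, ctx.hBD, ctx.hAC, ctx.hAD, ctx.hCD⟩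
  obtain ⟨-, Yc, hYc, hYcC, coalC⟩ := ctx.partner ctx.hC hnC
  obtain ⟨-, Yd, hYd, hYdD, coalD⟩ := ctx.partner ctx.hD hnD
  rcases ctx.hall Yc hYc with heqc | heqc | heqc | heqc
  · rw [heqc] at coalC
    rcases ctx.hall Yd hYd with heqd | heqd | heqd | heqd
    · rw [heqd] at coalD
      exact Or.inr (payload_B3' hIC ctx coalAB (icCoalition_symm coalC)
        (icCoalition_symm coalD))
    · rw [heqd] at coalD
      exact Or.inl (payload_B1' hIC ctxACBD hnd (icCoalition_symm coalC)
        (icCoalition_symm coalD))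
    · rw [heqd] at coalD
      exact Or.inl (payload_B1' hIC ctx hnd coalAB (icCoalition_symm coalD))
    · exact absurd heqd hYdD
  · rw [heqc] at coalC
    rcases ctx.hall Yd hYd with heqd | heqd | heqd | heqd
    · rw [heqd] at coalD
      exact Or.inl (payload_B1' hIC ctxADBC hnd (icCoalition_symm coalD)
        (icCoalition_symm coalC))
    · rw [heqd] at coalD
      exact Or.inr (payload_B3' hIC ctxBACD (icCoalition_symm coalAB)
        (icCoalition_symm coalC) (icCoalition_symm coalD))
    · rw [heqd] at coalD
      exact Or.inl (payload_B1' hIC ctx hnd coalAB (icCoalition_symm coalD))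
    · exact absurd heqd hYdD
  · exact absurd heqc hYcC
  · rw [heqc] at coalC
    exact Or.inl (payload_B1' hIC ctx hnd coalAB coalC)

lemma payload_B (hIC : IC G = 4) (ctx : Ctx G π A B C D)
    (hnA : ¬ DomSingleton G A) (hnB : ¬ DomSingleton G B)
    (hnC : ¬ DomSingleton G C) (hnD : ¬ DomSingleton G D) : InB1 G ∨ InB3 G := by
  have hnd : ∀ v : V, ¬ Dominating G {v} := by
    intro v hdom
    have key : ∀ X : Finset V, X ∈ π → ¬ DomSingleton G X → v ∉ X := by
      intro X hX hnX hvX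
      obtain ⟨-, YX, -, -, coalX⟩ := ctx.partner hX hnX
      apply hnX
      refine ⟨v, ?_, ?_⟩
      · apply Set.eq_singleton_iff_unique_mem.mpr
        refine ⟨Finset.mem_coe.mpr hvX, fun w hw => ?_⟩
        by_contra hwv
        exact coalX.2.1 (Finset.mem_coe.mpr hvX) hw
          (universal_of_dom_singleton hdom hwv)
      · refine dominating_mono ?_ hdom
        intro z hz
        rw [Set.mem_singleton_iff] at hz
        rw [hz]
        exact Finset.mem_coe.mpr hvX
    rcases ctx.cover v with hv | hv | hv | hv
    exacts [key A ctx.hA hnA hv, key B ctx.hB hnB hv, key C ctx.hC hnC hv,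
      key D ctx.hD hnD hv]
  have ctxACBD : Ctx G π A C B D :=
    ⟨ctx.hπ, ctx.hA, ctx.hC, ctx.hB, ctx.hD,
      fun E hE => by rcases ctx.hall E hE with h | h | h | h <;> tauto,
      ctx.hAC, ctx.hAB, ctx.hAD, ctx.hBC.symm, ctx.hCD, ctx.hBD⟩
  have ctxADBC : Ctx G π A D B C :=
    ⟨ctx.hπ, ctx.hA, ctx.hD, ctx.hB, ctx.hC,
      fun E hE => by rcases ctx.hall E hE with h | h | h | h <;> tauto,
      ctx.hAD, ctx.hAB, ctx.hAC, ctx.hBD.symm, ctx.hCD.symm, ctx.hBC⟩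
  obtain ⟨-, Ya, hYa, hYaA, coalA⟩ := ctx.partner ctx.hA hnA
  rcases ctx.hall Ya hYa with heqa | heqa | heqa | heqa
  · exact absurd heqa hYaA
  · rw [heqa] at coalA
    exact payload_B_inner hIC ctx hnd hnC hnD coalA
  · rw [heqa] at coalA
    exact payload_B_inner hIC ctxACBD hnd hnB hnD coalA
  · rw [heqa] at coalA
    exact payload_B_inner hIC ctxADBC hnd hnB hnC coalA

end PayloadB
theorem stmt_15 {V : Type*} [Fintype V] (G : SimpleGraph V) (h : IC G = 4) :
    Nonempty (G ≃g (⊤ : SimpleGraph (Fin 4))) ∨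
    (∃ m : ℕ, 2 ≤ m ∧
      Nonempty (G ≃g graphJoin (⊤ : SimpleGraph (Fin 2)) (⊥ : SimpleGraph (Fin m)))) ∨
    (∃ (W : Type) (B : SimpleGraph W), InB2 B ∧
      Nonempty (G ≃g graphJoin (⊤ : SimpleGraph (Fin 1)) B)) ∨
    InB1 G ∨ InB3 G := by
  classical
  obtain ⟨π, hπ, hcard⟩ := exists_ic_partition h
  obtain ⟨A, B, C, D, hAB, hAC, hAD, hBC, hBD, hCD, hA, hB, hC, hD, hall⟩ :=
    card_eq_four hcard
  have ctx : Ctx G π A B C D := ⟨hπ, hA, hB, hC, hD, hall, hAB, hAC, hAD, hBC, hBD, hCD⟩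
  have ctxABDC : Ctx G π A B D C :=
    ⟨hπ, hA, hB, hD, hC,
      fun E hE => by rcases hall E hE with h | h | h | h <;> tauto,
      hAB, hAD, hAC, hBD, hBC, hCD.symm⟩
  have ctxACDB : Ctx G π A C D B :=
    ⟨hπ, hA, hC, hD, hB,
      fun E hE => by rcases hall E hE with h | h | h | h <;> tauto,
      hAC, hAD, hAB, hCD, hBC.symm, hBD.symm⟩
  have ctxACBD : Ctx G π A C B D :=
    ⟨hπ, hA, hC, hB, hD,
      fun E hE => by rcases hall E hE with h | h | h | h <;> tauto,
      hAC, hAB, hAD, hBC.symm, hCD, hBD⟩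
  have ctxADBC : Ctx G π A D B C :=
    ⟨hπ, hA, hD, hB, hC,
      fun E hE => by rcases hall E hE with h | h | h | h <;> tauto,
      hAD, hAB, hAC, hBD.symm, hCD.symm, hBC⟩
  have ctxBCDA : Ctx G π B C D A :=
    ⟨hπ, hB, hC, hD, hA,
      fun E hE => by rcases hall E hE with h | h | h | h <;> tauto,
      hBC, hBD, hAB.symm, hCD, hAC.symm, hAD.symm⟩
  have ctxBCAD : Ctx G π B C A D :=
    ⟨hπ, hB, hC, hA, hD,
      fun E hE => by rcases hall E hE with h | h | h | h <;> tauto,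
      hBC, hAB.symm, hBD, hAC.symm, hCD, hAD⟩
  have ctxBDAC : Ctx G π B D A C :=
    ⟨hπ, hB, hD, hA, hC,
      fun E hE => by rcases hall E hE with h | h | h | h <;> tauto,
      hBD, hAB.symm, hBC, hAD.symm, hCD.symm, hAC⟩
  have ctxBACD : Ctx G π B A C D :=
    ⟨hπ, hB, hA, hC, hD,
      fun E hE => by rcases hall E hE with h | h | h | h <;> tauto,
      hAB.symm, hBC, hBD, hAC, hAD, hCD⟩
  have ctxCDAB : Ctx G π C D A B :=
    ⟨hπ, hC, hD, hA, hB,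
      fun E hE => by rcases hall E hE with h | h | h | h <;> tauto,
      hCD, hAC.symm, hBC.symm, hAD.symm, hBD.symm, hAB⟩
  have ctxCABD : Ctx G π C A B D :=
    ⟨hπ, hC, hA, hB, hD,
      fun E hE => by rcases hall E hE with h | h | h | h <;> tauto,
      hAC.symm, hBC.symm, hCD, hAB, hAD, hBD⟩
  have ctxDABC : Ctx G π D A B C :=
    ⟨hπ, hD, hA, hB, hC,
      fun E hE => by rcases hall E hE with h | h | h | h <;> tauto,
      hAD.symm, hBD.symm, hCD.symm, hAB, hAC, hBC⟩
  by_cases hPA : DomSingleton G A <;> by_cases hPB : DomSingleton G B <;>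
    by_cases hPC : DomSingleton G C <;> by_cases hPD : DomSingleton G D
  · exact Or.inl (payload_K4 ctx hPA hPB hPC hPD)
  · exact (payload_3P ctx hPA hPB hPC hPD).elim
  · exact (payload_3P ctxABDC hPA hPB hPD hPC).elim
  · exact Or.inr (Or.inl (payload_K2 ctx hPA hPB hPC hPD))
  · exact (payload_3P ctxACDB hPA hPC hPD hPB).elim
  · exact Or.inr (Or.inl (payload_K2 ctxACBD hPA hPC hPB hPD))
  · exact Or.inr (Or.inl (payload_K2 ctxADBC hPA hPD hPB hPC))
  · exact Or.inr (Or.inr (Or.inl (payload_K1 h ctx hPA hPB hPC hPD)))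
  · exact (payload_3P ctxBCDA hPB hPC hPD hPA).elim
  · exact Or.inr (Or.inl (payload_K2 ctxBCAD hPB hPC hPA hPD))
  · exact Or.inr (Or.inl (payload_K2 ctxBDAC hPB hPD hPA hPC))
  · exact Or.inr (Or.inr (Or.inl (payload_K1 h ctxBACD hPB hPA hPC hPD)))
  · exact Or.inr (Or.inl (payload_K2 ctxCDAB hPC hPD hPA hPB))
  · exact Or.inr (Or.inr (Or.inl (payload_K1 h ctxCABD hPC hPA hPB hPD)))
  · exact Or.inr (Or.inr (Or.inl (payload_K1 h ctxDABC hPD hPA hPB hPC)))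
  · rcases payload_B h ctx hPA hPB hPC hPD with h1 | h3
    · exact Or.inr (Or.inr (Or.inr (Or.inl h1)))
    · exact Or.inr (Or.inr (Or.inr (Or.inr h3)))

end ICNL
end

section
/- Let G be a graph of order n with minimum degree δ(G) = 1. Then IC(G) = n if and only if G is isomorphic to K_2, or G belongs to the family F, i.e., n ≥ 3 and G has a pendant vertex x with support vertex y (the unique neighbor of x) such that the set V(G) ∖ {x, y} induces a clique in G. -/
namespace ICNL

variable {V : Type*}

/-! ### Auxiliary lemmas -/

lemma indepSet_singleton (G : SimpleGraph V) (v : V) : IndepSet G {v} := by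
  intro a ha b hb hadj
  rw [Set.mem_singleton_iff] at ha hb
  subst ha; subst hb
  exact G.loopless.irrefl _ hadj

lemma indepSet_pair (G : SimpleGraph V) {a b : V} (h : ¬ G.Adj a b) :
    IndepSet G ({a} ∪ {b}) := by
  intro u hu v hv hadj
  simp only [Set.mem_union, Set.mem_singleton_iff] at hu hv
  rcases hu with rfl | rfl <;> rcases hv with rfl | rfl
  · exact G.loopless.irrefl _ hadj
  · exact h hadj
  · exact h hadj.symm
  · exact G.loopless.irrefl _ hadj

lemma partition_disjoint {π : Finset (Finset V)} (hπ : IsPartition π)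
    {A B : Finset V} (hA : A ∈ π) (hB : B ∈ π) (hne : A ≠ B) : Disjoint A B := by
  rw [Finset.disjoint_left]
  intro v hvA hvB
  obtain ⟨C, -, hC⟩ := hπ.2 v
  exact hne ((hC A ⟨hA, hvA⟩).trans (hC B ⟨hB, hvB⟩).symm)

lemma partition_sum_card [Fintype V] {π : Finset (Finset V)} (hπ : IsPartition π) :
    ∑ A ∈ π, A.card = Fintype.card V := by
  classical
  rw [← Finset.card_biUnion (fun A hA B hB hne => partition_disjoint hπ hA hB hne)]
  congr 1
  apply Finset.eq_univ_of_forall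
  intro v
  obtain ⟨A, ⟨hA, hv⟩, -⟩ := hπ.2 v
  exact Finset.mem_biUnion.2 ⟨A, hA, hv⟩

lemma partition_card_le [Fintype V] {π : Finset (Finset V)} (hπ : IsPartition π) :
    π.card ≤ Fintype.card V := by
  calc π.card = ∑ _A ∈ π, 1 := by simp
  _ ≤ ∑ A ∈ π, A.card := Finset.sum_le_sum fun A hA =>
      Finset.card_pos.2 (hπ.1 A hA)
  _ = Fintype.card V := partition_sum_card hπ

lemma partition_classes_eq_singleton [Fintype V] {π : Finset (Finset V)}
    (hπ : IsPartition π) (hcard : π.card = Fintype.card V) :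
    ∀ A ∈ π, ∃ v, A = ({v} : Finset V) := by
  have hall : ∀ A ∈ π, A.card = 1 := by
    by_contra h
    push_neg at h
    obtain ⟨A, hA, hA1⟩ := h
    have h2 : 1 < A.card := lt_of_le_of_ne (Finset.card_pos.2 (hπ.1 A hA)) (Ne.symm hA1)
    have hlt : ∑ _A ∈ π, 1 < ∑ A ∈ π, A.card :=
      Finset.sum_lt_sum (fun B hB => Finset.card_pos.2 (hπ.1 B hB)) ⟨A, hA, h2⟩
    rw [partition_sum_card hπ] at hlt
    simp only [Finset.sum_const, smul_eq_mul, mul_one] at hlt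
    omega
  intro A hA
  exact Finset.card_eq_one.1 (hall A hA)

lemma partition_singleton_mem [Fintype V] {π : Finset (Finset V)}
    (hπ : IsPartition π) (hcard : π.card = Fintype.card V) (v : V) :
    ({v} : Finset V) ∈ π := by
  obtain ⟨A, ⟨hA, hv⟩, -⟩ := hπ.2 v
  obtain ⟨w, rfl⟩ := partition_classes_eq_singleton hπ hcard A hA
  rw [Finset.mem_singleton] at hv
  subst hv
  exact hA

lemma IC_eq_card_iff [Fintype V] (G : SimpleGraph V) {n : ℕ}
    (hn : Fintype.card V = n) (hn0 : 0 < n) :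
    IC G = n ↔ ∃ π : Finset (Finset V), IsICPartition G π ∧ π.card = n := by
  have hbdd : ∀ k ∈ {k | ∃ π : Finset (Finset V), IsICPartition G π ∧ π.card = k}, k ≤ n := by
    rintro k ⟨π, hπ, rfl⟩
    rw [← hn]
    exact partition_card_le hπ.1
  constructor
  · intro h
    have hne : {k | ∃ π : Finset (Finset V), IsICPartition G π ∧ π.card = k}.Nonempty := by
      by_contra hne
      rw [Set.not_nonempty_iff_eq_empty] at hne
      rw [IC, hne, csSup_empty] at h
      simp at h
      omega
    have := Nat.sSup_mem hne ⟨n, hbdd⟩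
    rw [IC] at h
    rw [h] at this
    exact this
  · rintro ⟨π, hπ, hcard⟩
    have hmem : n ∈ {k | ∃ π : Finset (Finset V), IsICPartition G π ∧ π.card = k} :=
      ⟨π, hπ, hcard⟩
    exact le_antisymm (csSup_le ⟨n, hmem⟩ hbdd) (le_csSup ⟨n, hbdd⟩ hmem)

theorem stmt_18 {V : Type*} [Fintype V] (G : SimpleGraph V) [DecidableRel G.Adj]
    (n : ℕ) (hn : Fintype.card V = n) (hδ : G.minDegree = 1) :
    IC G = n ↔ (Nonempty (G ≃g (⊤ : SimpleGraph (Fin 2))) ∨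
      (3 ≤ n ∧ ∃ x y : V, G.Adj x y ∧ (∀ w : V, G.Adj x w → w = y) ∧
        ∀ u v : V, u ≠ x → u ≠ y → v ≠ x → v ≠ y → u ≠ v → G.Adj u v)) := by
  classical
  have hV : Nonempty V := by
    by_contra h
    rw [not_nonempty_iff] at h
    simp [SimpleGraph.minDegree, Finset.univ_eq_empty] at hδ
  -- extract a pendant vertex
  obtain ⟨x, hx⟩ := G.exists_minimal_degree_vertex
  rw [hδ] at hx
  have hxdeg : G.degree x = 1 := hx.symm
  rw [SimpleGraph.degree, Finset.card_eq_one] at hxdeg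
  obtain ⟨y, hy⟩ := hxdeg
  have hadjxy : G.Adj x y := by
    have : y ∈ G.neighborFinset x := by rw [hy]; exact Finset.mem_singleton_self y
    rwa [SimpleGraph.mem_neighborFinset] at this
  have huniq : ∀ w : V, G.Adj x w → w = y := by
    intro w hw
    have : w ∈ G.neighborFinset x := by rwa [SimpleGraph.mem_neighborFinset]
    rwa [hy, Finset.mem_singleton] at this
  have hxy : x ≠ y := G.ne_of_adj hadjxy
  have hn2 : 2 ≤ n := by
    rw [← hn]
    calc 2 = ({x, y} : Finset V).card := (Finset.card_pair hxy).symm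
    _ ≤ Finset.univ.card := Finset.card_le_card (Finset.subset_univ _)
    _ = Fintype.card V := rfl
  have hn0 : 0 < n := by omega
  rw [IC_eq_card_iff G hn hn0]
  constructor
  · rintro ⟨π, hπ, hcard⟩
    have hcard' : π.card = Fintype.card V := by rw [hcard, hn]
    have hsing : ∀ v : V, ({v} : Finset V) ∈ π := partition_singleton_mem hπ.1 hcard'
    have hBsing : ∀ B ∈ π, ∃ c, B = ({c} : Finset V) :=
      partition_classes_eq_singleton hπ.1 hcard'
    rcases Nat.lt_or_ge n 3 with hlt | hge
    · -- n = 2 : G ≅ K₂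
      left
      have hn2' : n = 2 := by omega
      have huniv : ({x, y} : Finset V) = Finset.univ := by
        apply Finset.eq_univ_of_card
        rw [Finset.card_pair hxy, hn, hn2']
      have hall : ∀ v : V, v = x ∨ v = y := by
        intro v
        have : v ∈ ({x, y} : Finset V) := huniv ▸ Finset.mem_univ v
        simpa using this
      refine ⟨⟨⟨fun v => if v = x then 0 else 1, fun i => if i = 0 then x else y, ?_, ?_⟩, ?_⟩⟩
      · intro v
        rcases hall v with rfl | rfl
        · simp
        · simp [hxy.symm]
      · intro i
        fin_cases i <;> simp [hxy, hxy.symm]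
      · intro a b
        simp only [Equiv.coe_fn_mk, SimpleGraph.top_adj]
        rcases hall a with rfl | rfl <;> rcases hall b with rfl | rfl <;>
          simp [hxy, hxy.symm, hadjxy, hadjxy.symm, G.loopless]
    · -- n ≥ 3 : family F
      right
      refine ⟨hge, x, y, hadjxy, huniq, ?_⟩
      intro u v hux huy hvx hvy huv
      by_contra hadj
      -- the coalition partner of a singleton {w}, w ∉ {x,y}, is {x} or {y}
      have key : ∀ w : V, w ≠ x → w ≠ y →
          ∃ c : V, (c = x ∨ c = y) ∧ ICCoalition G ({w} : Set V) ({c} : Set V) := by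
        intro w hwx hwy
        rcases hπ.2 ({w} : Finset V) (hsing w) with ⟨z, hz, hdom⟩ | ⟨-, B, hB, -, hcoal⟩
        · exfalso
          rcases hdom x with hx1 | ⟨t, ht, hadj'⟩
          · rw [Finset.coe_singleton, Set.mem_singleton_iff] at hx1
            exact hwx hx1.symm
          · rw [Finset.coe_singleton, Set.mem_singleton_iff] at ht
            subst ht
            exact hwy (huniq _ hadj'.symm)
        · obtain ⟨c, rfl⟩ := hBsing B hB
          simp only [Finset.coe_singleton] at hcoal
          refine ⟨c, ?_, hcoal⟩
          rcases hcoal.2.2.2.2.2.2 x with hmem | ⟨t, ht, hadjt⟩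
          · simp only [Set.mem_union, Set.mem_singleton_iff] at hmem
            rcases hmem with rfl | rfl
            · exact absurd rfl hwx
            · exact Or.inl rfl
          · simp only [Set.mem_union, Set.mem_singleton_iff] at ht
            rcases ht with rfl | rfl
            · exact absurd (huniq t hadjt.symm) hwy
            · exact Or.inr (huniq t hadjt.symm)
      obtain ⟨c, hc, hcoalu⟩ := key u hux huy
      rcases hc with rfl | rfl
      · -- partner of u is {x} : then {u,x} must dominate v, impossible
        rcases hcoalu.2.2.2.2.2.2 v with hmem | ⟨t, ht, hadjt⟩
        · simp only [Set.mem_union, Set.mem_singleton_iff] at hmem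
          rcases hmem with rfl | rfl
          · exact huv rfl
          · exact hvx rfl
        · simp only [Set.mem_union, Set.mem_singleton_iff] at ht
          rcases ht with rfl | rfl
          · exact hadj hadjt
          · exact hvy (huniq v hadjt)
      · -- partner of u is {y} : then Adj y v
        have hyv : G.Adj c v := by
          rcases hcoalu.2.2.2.2.2.2 v with hmem | ⟨t, ht, hadjt⟩
          · simp only [Set.mem_union, Set.mem_singleton_iff] at hmem
            rcases hmem with rfl | rfl
            · exact absurd rfl huv
            · exact absurd rfl hvy
          · simp only [Set.mem_union, Set.mem_singleton_iff] at ht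
            rcases ht with rfl | rfl
            · exact absurd hadjt hadj
            · exact hadjt
        obtain ⟨c', hc', hcoalv⟩ := key v hvx hvy
        rcases hc' with rfl | rfl
        · rcases hcoalv.2.2.2.2.2.2 u with hmem | ⟨t, ht, hadjt⟩
          · simp only [Set.mem_union, Set.mem_singleton_iff] at hmem
            rcases hmem with rfl | rfl
            · exact huv rfl
            · exact hux rfl
          · simp only [Set.mem_union, Set.mem_singleton_iff] at ht
            rcases ht with rfl | rfl
            · exact hadj hadjt.symm
            · exact huy (huniq u hadjt)
        · exact hcoalv.2.2.2.2.2.1 (Or.inr rfl) (Or.inl rfl) hyv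
  · -- backward direction: construct the singleton partition
    rintro hhyp
    set π₀ : Finset (Finset V) := Finset.univ.image (fun v : V => ({v} : Finset V)) with hπ₀
    have hmem0 : ∀ A ∈ π₀, ∃ v, A = ({v} : Finset V) := by
      intro A hA
      obtain ⟨v, -, rfl⟩ := Finset.mem_image.1 hA
      exact ⟨v, rfl⟩
    have hmem0' : ∀ v : V, ({v} : Finset V) ∈ π₀ := fun v =>
      Finset.mem_image.2 ⟨v, Finset.mem_univ v, rfl⟩
    have hpart : IsPartition π₀ := by
      constructor
      · intro A hA
        obtain ⟨v, rfl⟩ := hmem0 A hA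
        exact ⟨v, Finset.mem_singleton_self v⟩
      · intro v
        refine ⟨{v}, ⟨hmem0' v, Finset.mem_singleton_self v⟩, ?_⟩
        rintro A ⟨hA, hvA⟩
        obtain ⟨w, rfl⟩ := hmem0 A hA
        rw [Finset.mem_singleton] at hvA
        subst hvA
        rfl
    have hcard0 : π₀.card = n := by
      rw [hπ₀, Finset.card_image_of_injective _ Finset.singleton_injective,
        Finset.card_univ, hn]
    refine ⟨π₀, ⟨hpart, ?_⟩, hcard0⟩
    rcases hhyp with hK2 | ⟨hge, x', y', hadj', huniq', hclique⟩
    · -- K₂ case: every singleton is dominating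
      obtain ⟨e⟩ := hK2
      have hdomv : ∀ v : V, Dominating G ({v} : Set V) := by
        intro v u
        by_cases h : u = v
        · exact Or.inl (by simp [h])
        · refine Or.inr ⟨v, rfl, ?_⟩
          have : (⊤ : SimpleGraph (Fin 2)).Adj (e v) (e u) := by
            rw [SimpleGraph.top_adj]
            intro hh
            exact h (e.injective hh).symm
          exact e.map_rel_iff.1 this
      intro A hA
      obtain ⟨v, rfl⟩ := hmem0 A hA
      exact Or.inl ⟨v, Finset.coe_singleton v, by rw [Finset.coe_singleton]; exact hdomv v⟩
    · -- family F case
      have ⟨z, hzx, hzy⟩ : ∃ z : V, z ≠ x' ∧ z ≠ y' := by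
        by_contra h
        push_neg at h
        have hsub : (Finset.univ : Finset V) ⊆ {x', y'} := by
          intro t _
          by_cases htx : t = x'
          · simp [htx]
          · simp [h t htx]
        have h1 := Finset.card_le_card hsub
        have h2 : ({x', y'} : Finset V).card ≤ 2 := Finset.card_insert_le x' {y'} |>.trans (by simp)
        rw [Finset.card_univ, hn] at h1
        omega
      have hnadjx : ∀ w : V, w ≠ y' → ¬ G.Adj x' w := fun w hw hadj => hw (huniq' w hadj)
      have hnodomx : ¬ Dominating G ({x'} : Set V) := by
        intro h
        rcases h z with hmem | ⟨t, ht, hadjt⟩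
        · exact hzx (Set.mem_singleton_iff.1 hmem)
        · rw [Set.mem_singleton_iff] at ht
          subst ht
          exact hzy (huniq' z hadjt)
      have hnodomw : ∀ w : V, w ≠ x' → w ≠ y' → ¬ Dominating G ({w} : Set V) := by
        intro w hwx hwy h
        rcases h x' with hmem | ⟨t, ht, hadjt⟩
        · exact hwx (Set.mem_singleton_iff.1 hmem).symm
        · rw [Set.mem_singleton_iff] at ht
          subst ht
          exact hwy (huniq' _ hadjt.symm)
      have hdompair : ∀ a b : V, (a = x' ∨ a = y') → b ≠ x' → b ≠ y' →
          Dominating G (({a} : Set V) ∪ {b}) := by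
        intro a b ha hbx hby t
        by_cases hta : t = a
        · exact Or.inl (Or.inl (by simp [hta]))
        by_cases htb : t = b
        · exact Or.inl (Or.inr (by simp [htb]))
        by_cases htx : t = x'
        · have ha' : a = y' := by
            rcases ha with rfl | rfl
            · exact absurd htx hta
            · rfl
          exact Or.inr ⟨a, Or.inl rfl, by rw [ha', htx]; exact hadj'.symm⟩
        by_cases hty : t = y'
        · have ha' : a = x' := by
            rcases ha with rfl | rfl
            · rfl
            · exact absurd hty hta
          exact Or.inr ⟨a, Or.inl rfl, by rw [ha', hty]; exact hadj'⟩
        · exact Or.inr ⟨b, Or.inr rfl, hclique b t hbx hby htx hty (Ne.symm htb)⟩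
      have mkco : ∀ a b : V, ¬ G.Adj a b → ¬ Dominating G ({a} : Set V) →
          ¬ Dominating G ({b} : Set V) → Dominating G (({a} : Set V) ∪ {b}) →
          ICCoalition G ({a} : Set V) ({b} : Set V) := by
        intro a b hnadj hda hdb hdom
        have hne : a ≠ b := by
          rintro rfl
          exact hda (fun t => (hdom t).imp (by simp) (by simp))
        exact ⟨by simp [hne], indepSet_singleton G a, indepSet_singleton G b,
          fun h => hda h.2, fun h => hdb h.2, indepSet_pair G hnadj, hdom⟩
      intro A hA
      obtain ⟨v, rfl⟩ := hmem0 A hA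
      by_cases hdomv : Dominating G ({v} : Set V)
      · exact Or.inl ⟨v, Finset.coe_singleton v, by rw [Finset.coe_singleton]; exact hdomv⟩
      right
      rw [Finset.coe_singleton]
      refine ⟨fun h => hdomv h.2, ?_⟩
      by_cases hvx : v = x'
      · subst hvx
        refine ⟨{z}, hmem0' z, fun h => hzx (Finset.singleton_injective h), ?_⟩
        rw [Finset.coe_singleton]
        exact mkco v z (hnadjx z hzy) hdomv (hnodomw z hzx hzy) (hdompair v z (Or.inl rfl) hzx hzy)
      by_cases hvy : v = y'
      · subst hvy
        rw [Dominating] at hdomv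
        push_neg at hdomv
        obtain ⟨w, hw1, hw2⟩ := hdomv
        rw [Set.mem_singleton_iff] at hw1
        have hnadjvw : ¬ G.Adj v w := hw2 v rfl
        have hwx : w ≠ x' := by
          rintro rfl
          exact hnadjvw hadj'.symm
        refine ⟨{w}, hmem0' w, ?_, ?_⟩
        · intro h
          exact hw1 (Finset.singleton_injective h)
        rw [Finset.coe_singleton]
        refine mkco v w hnadjvw (fun h => (h w).elim (fun hh => hw1 (Set.mem_singleton_iff.1 hh)) (fun ⟨t, ht, hadjt⟩ => hw2 t ht hadjt)) (hnodomw w hwx hw1) (hdompair v w (Or.inr rfl) hwx hw1)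
      · refine ⟨{x'}, hmem0' x', fun h => hvx (Finset.singleton_injective h).symm, ?_⟩
        rw [Finset.coe_singleton]
        have hnadjvx : ¬ G.Adj v x' := fun h => (hnadjx v hvy) h.symm
        have hdu : Dominating G (({v} : Set V) ∪ {x'}) := by
          have := hdompair x' v (Or.inl rfl) hvx hvy
          rwa [Set.union_comm] at this
        exact mkco v x' hnadjvx hdomv hnodomx hdu
end ICNL
end
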